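/- arXiv:2303.01824 — 8 statements merged into one kernel-verified Lean document; each statement's English description precedes it below -/
import Mathlib

section
/- When meeting rates do not depend on market shares, the sensitivity of the equilibrium market share to preferences is at most one: for all μ ≥ 0 and λ_A, λ_B > 0, the coefficient ∂s_A/∂p_a = λ_A·λ_B·(2μ+λ_tot)/(λ_tot·(μ+λ_A)·(μ+λ_B)) satisfies λ_A·λ_B·(2μ+λ_A+λ_B) ≤ (λ_A+λ_B)·(μ+λ_A)·(μ+λ_B), with equality if and only if μ = 0. -/
/-- When meeting rates do not depend on market shares, the sensitivity of the
equilibrium market share to preferences is at most one: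
`λ_A λ_B (2μ + λ_A + λ_B) ≤ (λ_A+λ_B)(μ+λ_A)(μ+λ_B)`, with equality iff `μ = 0`. -/
theorem preference_slope_at_most_one (μ lamA lamB : ℝ)
    (hμ : 0 ≤ μ) (hlamA : 0 < lamA) (hlamB : 0 < lamB) :
    lamA * lamB * (2 * μ + lamA + lamB) ≤ (lamA + lamB) * (μ + lamA) * (μ + lamB) ∧
    (lamA * lamB * (2 * μ + lamA + lamB) = (lamA + lamB) * (μ + lamA) * (μ + lamB)
      ↔ μ = 0) := by
  constructor
  · nlinarith [sq_nonneg (lamA - lamB), sq_nonneg μ, mul_pos hlamA hlamB]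
  · constructor
    · intro h
      nlinarith [sq_nonneg (lamA - lamB), sq_nonneg μ, mul_pos hlamA hlamB,
        sq_nonneg lamA, sq_nonneg lamB]
    · intro h; subst h; ring
end

section
/- When meeting rates are proportional to market shares, the interior equilibrium share is s_A = p_a(2r_f+1) − r_f, and frictions advantage the most preferred firm. Precisely: let μ, λ_tot > 0, r_f = μ/λ_tot, and p_a ∈ (r_f/(2r_f+1), (r_f+1)/(2r_f+1)). Then s := p_a(2r_f+1) − r_f lies in (0,1) and satisfies the equilibrium equation s = (λ_tot·s/(μ+λ_tot·(1−s)))·(μ/λ_tot) + p_a·λ_tot²·s·(1−s)·(2μ+λ_tot)/(λ_tot·(μ+λ_tot·s)·(μ+λ_tot·(1−s))), obtained by substituting λ_A = λ_tot·s and λ_B = λ_tot·(1−s). Moreover s − p_a = r_f(2p_a − 1), so s ≥ p_a whenever p_a ≥ 1/2, with strict inequality if p_a > 1/2 and r_f > 0. -/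
/-- Balanced matching: the interior equilibrium share is
`s = p_a (2 r_f + 1) - r_f`, it lies in `(0,1)`, satisfies the equilibrium
equation obtained from Equation (1) with `λ_A = λ_tot s` and `λ_B = λ_tot (1-s)`,
and frictions advantage the most preferred firm. -/
theorem balanced_matching_interior_share (μ lamtot pa rf : ℝ)
    (hμ : 0 < μ) (hlamtot : 0 < lamtot) (hrf : rf = μ / lamtot)
    (hpa : pa ∈ Set.Ioo (rf / (2 * rf + 1)) ((rf + 1) / (2 * rf + 1))) :
    let s := pa * (2 * rf + 1) - rf
    s ∈ Set.Ioo (0:ℝ) 1 ∧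
    s = (lamtot * s / (μ + lamtot * (1 - s))) * (μ / lamtot) +
        pa * (lamtot ^ 2 * s * (1 - s) * (2 * μ + lamtot) /
          (lamtot * (μ + lamtot * s) * (μ + lamtot * (1 - s)))) ∧
    s - pa = rf * (2 * pa - 1) ∧
    (1/2 ≤ pa → pa ≤ s) ∧
    (1/2 < pa → 0 < rf → pa < s) := by
  intro s
  obtain ⟨h1, h2⟩ := hpa
  have hrfpos : 0 < rf := by rw [hrf]; positivity
  have hden : 0 < 2 * rf + 1 := by linarith
  have hs0 : 0 < s := by
    have := (div_lt_iff₀ hden).mp h1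
    simp only [s]; linarith
  have hs1 : s < 1 := by
    have := (lt_div_iff₀ hden).mp h2
    simp only [s]; linarith
  have hml : rf * lamtot = μ := by
    rw [hrf]; field_simp
  have hA : 0 < μ + lamtot * s := by positivity
  have hB : 0 < μ + lamtot * (1 - s) := by nlinarith
  refine ⟨⟨hs0, hs1⟩, ?_, by simp only [s]; ring, ?_, ?_⟩
  · have hrel : lamtot * s = pa * (2 * μ + lamtot) - μ := by
      simp only [s]; rw [hrf]; field_simp
    have hC : (0:ℝ) < 2 * μ + lamtot := by linarith
    have hpa' : pa = (lamtot * s + μ) / (2 * μ + lamtot) := by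
      rw [eq_div_iff hC.ne']; linarith
    show s = _
    rw [hpa']
    field_simp
    ring
  · intro h; simp only [s]; nlinarith
  · intro h hr; simp only [s]; nlinarith
end

section
/- When frictions are negligible, the size of each firm converges to the mass of agents that prefer it, even with non-constant meeting rates: let λ : [0,1] → ℝ be continuous and strictly positive with ∫₀¹ λ = 1 (viewed as a function on the circle, so λ(0) = λ(1)), let ℓ : [0,1] → ℝ be continuous and nonnegative on the circle, and for r > 0 and y ∈ [0,1] define s_r(y) = λ(y)·∫₀¹ r(r+1)·ℓ(x)/(r + L(x,y))² dx, where L(x,y) = ∫₀¹ λ(y')·1[d(x,y') < d(x,y)] dy' and d is the circle distance d(x,y) = min_{k∈ℤ} |x − y + k|. Then for every y, s_r(y) → ℓ(y) as r → 0⁺. -/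
open MeasureTheory

/-- Distance on the circle of circumference 1: `d(x,y) = min_{k ∈ ℤ} |x - y + k|`. -/
noncomputable def circleDist (x y : ℝ) : ℝ :=
  sInf {v : ℝ | ∃ k : ℤ, v = |x - y + (k : ℝ)|}

lemma circleDist_set_nonempty (x y : ℝ) :
    {v : ℝ | ∃ k : ℤ, v = |x - y + (k : ℝ)|}.Nonempty := ⟨|x - y|, 0, by simp⟩

lemma circleDist_bddBelow (x y : ℝ) :
    BddBelow {v : ℝ | ∃ k : ℤ, v = |x - y + (k : ℝ)|} := by
  exact ⟨0, fun v ⟨k, hk⟩ => hk ▸ abs_nonneg _⟩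

lemma circleDist_nonneg (x y : ℝ) : 0 ≤ circleDist x y :=
  le_csInf (circleDist_set_nonempty x y) (fun v ⟨k, hk⟩ => hk ▸ abs_nonneg _)

lemma circleDist_le (x y : ℝ) (k : ℤ) : circleDist x y ≤ |x - y + (k : ℝ)| :=
  csInf_le (circleDist_bddBelow x y) ⟨k, rfl⟩

lemma circleDist_le_abs (x y : ℝ) : circleDist x y ≤ |x - y| := by
  simpa using circleDist_le x y 0

lemma circleDist_eq_zero_base (x y : ℝ) : circleDist x y = circleDist (x - y) 0 := by
  unfold circleDist; norm_num

lemma circleDist_period (t : ℝ) : circleDist (t + 1) 0 = circleDist t 0 := by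
  unfold circleDist
  congr 1
  ext v
  constructor
  · rintro ⟨k, rfl⟩; exact ⟨k + 1, by push_cast; ring_nf⟩
  · rintro ⟨k, rfl⟩; exact ⟨k - 1, by push_cast; ring_nf⟩

lemma circleDist_neg (t : ℝ) : circleDist (-t) 0 = circleDist t 0 := by
  unfold circleDist
  congr 1
  ext v
  constructor
  · rintro ⟨k, rfl⟩; exact ⟨-k, by push_cast; rw [← abs_neg]; ring_nf⟩
  · rintro ⟨k, rfl⟩; exact ⟨-k, by push_cast; rw [← abs_neg]; ring_nf⟩

lemma circleDist_symm (x y : ℝ) : circleDist x y = circleDist y x := by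
  rw [circleDist_eq_zero_base, circleDist_eq_zero_base y x, ← circleDist_neg, neg_sub]

lemma circleDist_triangle (x y z : ℝ) :
    circleDist x z ≤ circleDist x y + circleDist y z := by
  have h1 : ∀ k : ℤ, circleDist x z - circleDist y z ≤ |x - y + (k : ℝ)| := by
    intro k
    have h2 : ∀ j : ℤ, circleDist x z - |x - y + (k : ℝ)| ≤ |y - z + (j : ℝ)| := by
      intro j
      have := circleDist_le x z (k + j)
      have habs : |x - z + ((k + j : ℤ) : ℝ)| ≤ |x - y + (k : ℝ)| + |y - z + (j : ℝ)| := by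
        push_cast
        calc |x - z + ((k : ℝ) + j)| = |(x - y + k) + (y - z + j)| := by ring_nf
        _ ≤ _ := abs_add_le _ _
      linarith
    have h3 : circleDist x z - |x - y + (k : ℝ)| ≤ circleDist y z :=
      le_csInf (circleDist_set_nonempty y z) (by rintro v ⟨j, rfl⟩; exact h2 j)
    linarith
  have h4 : circleDist x z - circleDist y z ≤ circleDist x y :=
    le_csInf (circleDist_set_nonempty x y) (by rintro v ⟨k, rfl⟩; exact h1 k)
  linarith

lemma circleDist_formula {t : ℝ} (ht : |t| ≤ 1) :
    circleDist t 0 = min |t| (1 - |t|) := by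
  apply le_antisymm
  · rcases le_total |t| (1 - |t|) with h | h
    · rw [min_eq_left h]
      simpa using circleDist_le t 0 0
    · rw [min_eq_right h]
      rcases le_total 0 t with ht0 | ht0
      · have := circleDist_le t 0 (-1)
        rw [abs_of_nonneg ht0]
        calc circleDist t 0 ≤ |t - 0 + ((-1 : ℤ) : ℝ)| := this
        _ = 1 - t := by rw [abs_of_nonpos (by push_cast; linarith [abs_of_nonneg ht0 ▸ ht])]; push_cast; ring
      · have := circleDist_le t 0 1
        rw [abs_of_nonpos ht0]
        calc circleDist t 0 ≤ |t - 0 + ((1 : ℤ) : ℝ)| := this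
        _ = 1 + t := by rw [abs_of_nonneg (by push_cast; linarith [abs_of_nonpos ht0 ▸ ht])]; push_cast; ring
        _ = 1 - -t := by ring
  · apply le_csInf (circleDist_set_nonempty t 0)
    rintro v ⟨k, rfl⟩
    rcases lt_trichotomy k 0 with hk | hk | hk
    · have hk' : (k : ℝ) ≤ -1 := by exact_mod_cast (by omega : k ≤ -1)
      calc min |t| (1 - |t|) ≤ 1 - |t| := min_le_right _ _
      _ ≤ |t - 0 + (k:ℝ)| := by linarith [neg_le_abs (t - 0 + (k:ℝ)), le_abs_self t]
    · subst hk; simpa using min_le_left |t| (1 - |t|)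
    · have hk' : (1 : ℝ) ≤ k := by exact_mod_cast hk
      calc min |t| (1 - |t|) ≤ 1 - |t| := min_le_right _ _
      _ ≤ |t - 0 + (k:ℝ)| := by linarith [le_abs_self (t - 0 + (k:ℝ)), neg_le_abs t]

lemma circleDist_formula' {x y : ℝ} (h : |x - y| ≤ 1) :
    circleDist x y = min |x - y| (1 - |x - y|) := by
  rw [circleDist_eq_zero_base]; exact circleDist_formula h

lemma circleDist_le_half {x y : ℝ} (h : |x - y| ≤ 1) : circleDist x y ≤ 1 / 2 := by
  rw [circleDist_formula' h]
  rcases le_total |x - y| (1/2) with h1 | h1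
  · exact (min_le_left _ _).trans h1
  · exact (min_le_right _ _).trans (by linarith)

lemma circleDist_self (x : ℝ) : circleDist x x = 0 := by
  have h := circleDist_le_abs x x
  have := circleDist_nonneg x x
  simp at h; linarith

lemma circleDist_lipschitz (x y x' y' : ℝ) :
    |circleDist x y - circleDist x' y'| ≤ |x - x'| + |y - y'| := by
  have k1 : ∀ a b c d : ℝ, circleDist a b - circleDist c d ≤ |a - c| + |b - d| := by
    intro a b c d
    have t1 := circleDist_triangle a c b
    have t2 := circleDist_triangle c d b
    have l1 := circleDist_le_abs a c
    have l2 : circleDist d b ≤ |b - d| := by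
      rw [circleDist_symm]; exact circleDist_le_abs b d
    linarith
  rw [abs_sub_le_iff]
  constructor
  · exact k1 x y x' y'
  · have := k1 x' y' x y
    rw [abs_sub_comm x' x, abs_sub_comm y' y] at this
    exact this

lemma circleDist_continuous : Continuous (fun p : ℝ × ℝ => circleDist p.1 p.2) := by
  rw [Metric.continuous_iff]
  intro p ε hε
  refine ⟨ε / 2, by linarith, fun q hq => ?_⟩
  have h := circleDist_lipschitz q.1 q.2 p.1 p.2
  have h1 : |q.1 - p.1| ≤ dist q p := by
    rw [Prod.dist_eq]; exact le_max_of_le_left (le_of_eq (Real.dist_eq _ _).symm)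
  have h2 : |q.2 - p.2| ≤ dist q p := by
    rw [Prod.dist_eq]; exact le_max_of_le_right (le_of_eq (Real.dist_eq _ _).symm)
  rw [Real.dist_eq]
  linarith


lemma continuous_circleDist_left (z : ℝ) : Continuous fun u => circleDist u z :=
  circleDist_continuous.comp (continuous_id.prodMk continuous_const)

lemma continuous_circleDist_right (z : ℝ) : Continuous fun u => circleDist z u :=
  circleDist_continuous.comp (continuous_const.prodMk continuous_id)

lemma measurableSet_ball_right (z d : ℝ) : MeasurableSet {u : ℝ | circleDist z u < d} :=
  (isOpen_Iio.preimage (continuous_circleDist_right z)).measurableSet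

lemma measurableSet_ball_left (z d : ℝ) : MeasurableSet {u : ℝ | circleDist u z < d} :=
  (isOpen_Iio.preimage (continuous_circleDist_left z)).measurableSet

lemma circleDist_zero_of_mem {t : ℝ} (h1 : 0 ≤ t) (h2 : t ≤ 1/2) :
    circleDist t 0 = t := by
  rw [circleDist_formula (by rw [abs_of_nonneg h1]; linarith), abs_of_nonneg h1]
  exact min_eq_left (by linarith)

lemma integral_circleDist (z : ℝ) (hz : z ∈ Set.Icc (0:ℝ) 1) (f : ℝ → ℝ)
    (hG : IntervalIntegrable (fun t => f (circleDist t 0)) volume (-1) 1) :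
    ∫ t in (0:ℝ)..1, f (circleDist t z) = 2 * ∫ t in (0:ℝ)..(1/2), f t := by
  obtain ⟨hz0, hz1⟩ := hz
  set G : ℝ → ℝ := fun t => f (circleDist t 0) with hGdef
  have hper : ∀ t, G (t + 1) = G t := fun t => by
    simp only [hGdef, circleDist_period]
  have heven : ∀ t, G (-t) = G t := fun t => by
    simp only [hGdef, circleDist_neg]
  have hsub : ∀ a b : ℝ, -1 ≤ a → a ≤ b → b ≤ 1 → IntervalIntegrable G volume a b := by
    intro a b ha hab hb
    apply hG.mono_set
    rw [Set.uIcc_of_le hab, Set.uIcc_of_le (by norm_num : (-1:ℝ) ≤ 1)]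
    exact Set.Icc_subset_Icc ha hb
  have step1 : ∫ t in (0:ℝ)..1, f (circleDist t z) = ∫ t in (0:ℝ)..1, G (t - z) := by
    apply intervalIntegral.integral_congr
    intro t _
    simp only [hGdef]
    rw [circleDist_eq_zero_base]
  have step2 : ∫ t in (0:ℝ)..1, G (t - z) = ∫ t in (-z)..(1-z), G t := by
    have := intervalIntegral.integral_comp_sub_right (a := (0:ℝ)) (b := 1) G z
    simpa using this
  have step3 : ∫ t in (-z)..(1-z), G t = (∫ t in (-z)..(0:ℝ), G t) + ∫ t in (0:ℝ)..(1-z), G t :=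
    (intervalIntegral.integral_add_adjacent_intervals
      (hsub _ _ (by linarith) (by linarith) (by norm_num))
      (hsub _ _ (by norm_num) (by linarith) (by linarith))).symm
  have step4 : ∫ t in (-z)..(0:ℝ), G t = ∫ t in (1-z)..(1:ℝ), G t := by
    have e1 : ∫ t in (-z)..(0:ℝ), G t = ∫ t in (-z)..(0:ℝ), G (t + 1) := by
      simp only [hper]
    rw [e1, intervalIntegral.integral_comp_add_right G 1, show -z + 1 = 1 - z by ring]
    norm_num
  have step5 : (∫ t in (0:ℝ)..(1-z), G t) + ∫ t in (1-z)..(1:ℝ), G t = ∫ t in (0:ℝ)..1, G t :=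
    intervalIntegral.integral_add_adjacent_intervals
      (hsub _ _ (by norm_num) (by linarith) (by linarith))
      (hsub _ _ (by linarith) (by linarith) (by norm_num))
  have step6 : ∫ t in (0:ℝ)..1, G t = (∫ t in (0:ℝ)..(1/2), G t) + ∫ t in (1/2:ℝ)..1, G t :=
    (intervalIntegral.integral_add_adjacent_intervals
      (hsub _ _ (by norm_num) (by norm_num) (by norm_num))
      (hsub _ _ (by norm_num) (by norm_num) (by norm_num))).symm
  have step7 : ∫ t in (1/2:ℝ)..1, G t = ∫ t in (0:ℝ)..(1/2), G t := by
    have e1 : ∫ t in (1/2:ℝ)..1, G t = ∫ t in (1/2:ℝ)..1, G (1 - t) := by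
      apply intervalIntegral.integral_congr
      intro t _
      show G t = G (1 - t)
      have h1 := hper (t - 1)
      rw [show t - 1 + 1 = t by ring] at h1
      rw [h1, show t - 1 = -(1-t) by ring, heven]
    rw [e1]
    have := intervalIntegral.integral_comp_sub_left (a := (1/2:ℝ)) (b := 1) G 1
    rw [this]
    norm_num
  have step8 : ∫ t in (0:ℝ)..(1/2), G t = ∫ t in (0:ℝ)..(1/2), f t := by
    apply intervalIntegral.integral_congr
    intro t ht
    rw [Set.uIcc_of_le (by norm_num : (0:ℝ) ≤ 1/2)] at ht
    simp only [hGdef]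
    rw [circleDist_zero_of_mem ht.1 ht.2]
  rw [step1, step2, step3, step4, add_comm, step5, step6, step7, step8]
  ring


lemma kernel_antideriv {a r : ℝ} (ha : 0 < a) (hr : 0 < r) :
    ∫ t in (0:ℝ)..(1/2), r * (r+1) / (r + 2*a*t)^2 = (r+1) / (2*(r+a)) := by
  have key : ∀ t ∈ Set.uIcc (0:ℝ) (1/2),
      HasDerivAt (fun u => -(r*(r+1)/(2*a)) * (r + 2*a*u)⁻¹) (r * (r+1) / (r + 2*a*t)^2) t := by
    intro t ht
    rw [Set.uIcc_of_le (by norm_num : (0:ℝ) ≤ 1/2)] at ht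
    have hpos : 0 < r + 2*a*t := by nlinarith [ht.1]
    have hinner : HasDerivAt (fun u : ℝ => r + 2*a*u) (2*a) t := by
      simpa using ((hasDerivAt_id t).const_mul (2*a)).const_add r
    have hinv := hinner.inv (ne_of_gt hpos)
    have := hinv.const_mul (-(r*(r+1)/(2*a)))
    convert this using 1
    · rfl
    · rfl
    · rfl
    · field_simp
  have hcont : IntervalIntegrable (fun t => r * (r+1) / (r + 2*a*t)^2) volume 0 (1/2) := by
    apply ContinuousOn.intervalIntegrable
    apply ContinuousOn.div continuousOn_const
    · fun_prop
    · intro t ht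
      rw [Set.uIcc_of_le (by norm_num : (0:ℝ) ≤ 1/2)] at ht
      have hpos : 0 < r + 2*a*t := by nlinarith [ht.1]
      positivity
  rw [intervalIntegral.integral_eq_sub_of_hasDerivAt key hcont]
  have h1 : r + 2*a*(1/2) = r + a := by ring
  rw [h1]
  have h2 : (0:ℝ) < r + a := by linarith
  field_simp
  ring

lemma indicator_integral {d : ℝ} (hd0 : 0 ≤ d) (hd : d ≤ 1/2) :
    ∫ t in (0:ℝ)..(1/2), Set.indicator (Set.Iio d) (fun _ => (1:ℝ)) t = d := by
  rw [intervalIntegral.integral_of_le (by norm_num : (0:ℝ) ≤ 1/2)]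
  rw [MeasureTheory.integral_indicator measurableSet_Iio]
  rw [Measure.restrict_restrict measurableSet_Iio]
  have : Set.Iio d ∩ Set.Ioc 0 (1/2) = Set.Ioo 0 d := by
    ext t
    simp only [Set.mem_inter_iff, Set.mem_Iio, Set.mem_Ioc, Set.mem_Ioo]
    constructor
    · rintro ⟨h1, h2, h3⟩; exact ⟨h2, h1⟩
    · rintro ⟨h1, h2⟩; exact ⟨h2, h1, by linarith⟩
  rw [this]
  simp [Real.volume_Ioo, ENNReal.toReal_ofReal hd0, hd0]

lemma circle_unif_cont {h : ℝ → ℝ} (hc : ContinuousOn h (Set.Icc 0 1)) (hper : h 0 = h 1)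
    {y : ℝ} (hy : y ∈ Set.Icc (0:ℝ) 1) {ε : ℝ} (hε : 0 < ε) :
    ∃ δ : ℝ, 0 < δ ∧ δ ≤ 1/2 ∧
      ∀ u ∈ Set.Icc (0:ℝ) 1, circleDist u y < δ → |h u - h y| ≤ ε := by
  have huc : UniformContinuousOn h (Set.Icc 0 1) :=
    isCompact_Icc.uniformContinuousOn_of_continuous hc
  rw [Metric.uniformContinuousOn_iff] at huc
  obtain ⟨δ₀, hδ₀, hδ⟩ := huc (ε/2) (by linarith)
  set δ := min δ₀ (1/2) with hδdef
  refine ⟨δ, by positivity, min_le_right _ _, ?_⟩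
  intro u hu hcd
  have hδ1 : δ ≤ δ₀ := min_le_left _ _
  have hδ2 : δ ≤ 1/2 := min_le_right _ _
  have h0m : (0:ℝ) ∈ Set.Icc (0:ℝ) 1 := by norm_num
  have h1m : (1:ℝ) ∈ Set.Icc (0:ℝ) 1 := by norm_num
  have habs : |u - y| ≤ 1 := by
    rw [abs_sub_le_iff]
    obtain ⟨h1, h2⟩ := hu
    obtain ⟨h3, h4⟩ := hy
    constructor <;> linarith
  rw [circleDist_formula' habs] at hcd
  rcases min_lt_iff.mp hcd with hcase | hcase
  · have := hδ u hu y hy (by rw [Real.dist_eq]; linarith)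
    rw [Real.dist_eq] at this
    linarith
  · obtain ⟨hu0, hu1⟩ := hu
    obtain ⟨hy0, hy1⟩ := hy
    rcases le_total u y with hle | hle
    · have habs2 : |u - y| = y - u := by rw [abs_sub_comm, abs_of_nonneg (by linarith)]
      rw [habs2] at hcase
      have d1 : dist (h u) (h 0) < ε/2 :=
        hδ u ⟨hu0, hu1⟩ 0 h0m (by rw [Real.dist_eq, abs_of_nonneg (by linarith)]; linarith)
      have d2 : dist (h 1) (h y) < ε/2 :=
        hδ 1 h1m y ⟨hy0, hy1⟩ (by rw [Real.dist_eq, abs_of_nonneg (by linarith)]; linarith)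
      rw [Real.dist_eq] at d1 d2
      calc |h u - h y| ≤ |h u - h 0| + |h 0 - h y| := abs_sub_le _ _ _
      _ = |h u - h 0| + |h 1 - h y| := by rw [hper]
      _ ≤ ε := by linarith
    · have habs2 : |u - y| = u - y := abs_of_nonneg (by linarith)
      rw [habs2] at hcase
      have d1 : dist (h u) (h 1) < ε/2 :=
        hδ u ⟨hu0, hu1⟩ 1 h1m (by rw [Real.dist_eq, abs_of_nonpos (by linarith)]; linarith)
      have d2 : dist (h 0) (h y) < ε/2 :=
        hδ 0 h0m y ⟨hy0, hy1⟩ (by rw [Real.dist_eq, abs_of_nonpos (by linarith)]; linarith)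
      rw [Real.dist_eq] at d1 d2
      calc |h u - h y| ≤ |h u - h 1| + |h 1 - h y| := abs_sub_le _ _ _
      _ = |h u - h 1| + |h 0 - h y| := by rw [hper]
      _ ≤ ε := by linarith

lemma indicator_intervalIntegrable {s : Set ℝ} (hs : MeasurableSet s) (a b : ℝ) :
    IntervalIntegrable (Set.indicator s (fun _ => (1:ℝ))) volume a b := by
  apply IntervalIntegrable.mono_fun' (g := fun _ => (1:ℝ)) intervalIntegrable_const
  · exact ((measurable_const (a := (1:ℝ))).indicator hs).aestronglyMeasurable
  · filter_upwards with t
    rw [Real.norm_eq_abs]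
    by_cases h : t ∈ s <;> simp [Set.indicator_apply, h]

lemma L_measurable (lam : ℝ → ℝ) (hlam_cont : ContinuousOn lam (Set.Icc 0 1)) (y : ℝ) :
    AEStronglyMeasurable
      (fun x => ∫ y' in (0:ℝ)..1,
        Set.indicator {y' : ℝ | circleDist x y' < circleDist x y} lam y')
      (volume.restrict (Set.Ioc (0:ℝ) 1)) := by
  set ν := volume.restrict (Set.Ioc (0:ℝ) 1)
  set F : ℝ × ℝ → ℝ := fun z =>
    Set.indicator {z : ℝ × ℝ | circleDist z.1 z.2 < circleDist z.1 y} (fun z => lam z.2) z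
    with hF
  have heq : (fun x => ∫ y' in (0:ℝ)..1,
      Set.indicator {y' : ℝ | circleDist x y' < circleDist x y} lam y')
      = fun x => ∫ y', F (x, y') ∂ν := by
    funext x
    rw [intervalIntegral.integral_of_le zero_le_one]
    apply integral_congr_ae
    filter_upwards with y'
    simp only [hF, Set.indicator_apply, Set.mem_setOf_eq]
  rw [heq]
  apply AEStronglyMeasurable.integral_prod_right'
  apply AEStronglyMeasurable.indicator
  · exact ((hlam_cont.mono Set.Ioc_subset_Icc_self).aestronglyMeasurable measurableSet_Ioc).comp_snd
  · apply IsOpen.measurableSet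
    apply isOpen_lt
    · exact circleDist_continuous
    · exact circleDist_continuous.comp (continuous_fst.prodMk continuous_const)

lemma L_bounds (lam : ℝ → ℝ) (hlam_cont : ContinuousOn lam (Set.Icc 0 1))
    {x y a b : ℝ} (hx : x ∈ Set.Icc (0:ℝ) 1) (hy : y ∈ Set.Icc (0:ℝ) 1)
    (ha : 0 ≤ a) (hb : 0 ≤ b)
    (hab : ∀ u ∈ Set.Icc (0:ℝ) 1, circleDist u y < 2 * circleDist x y →
      a ≤ lam u ∧ lam u ≤ b) :
    a * (2 * circleDist x y) ≤
        (∫ y' in (0:ℝ)..1, Set.indicator {y' | circleDist x y' < circleDist x y} lam y') ∧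
      (∫ y' in (0:ℝ)..1, Set.indicator {y' | circleDist x y' < circleDist x y} lam y') ≤
        b * (2 * circleDist x y) := by
  set d := circleDist x y with hddef
  set S : Set ℝ := {u | circleDist x u < d} with hSdef
  have hd0 : 0 ≤ d := circleDist_nonneg x y
  have habs1 : |x - y| ≤ 1 := by
    rw [abs_sub_le_iff]
    obtain ⟨h1, h2⟩ := hx; obtain ⟨h3, h4⟩ := hy
    constructor <;> linarith
  have hd : d ≤ 1/2 := circleDist_le_half habs1
  have hSmeas : MeasurableSet S := measurableSet_ball_right x d
  set χ : ℝ → ℝ := Set.indicator S (fun _ => (1:ℝ)) with hχdef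
  have hpt : ∀ u ∈ Set.Icc (0:ℝ) 1,
      a * χ u ≤ Set.indicator S lam u ∧ Set.indicator S lam u ≤ b * χ u := by
    intro u hu
    by_cases hmem : u ∈ S
    · have hcd : circleDist u y < 2 * d := by
        have t := circleDist_triangle u x y
        have hsym : circleDist u x = circleDist x u := circleDist_symm u x
        have : circleDist x u < d := hmem
        rw [← hddef] at t
        linarith
      obtain ⟨hl, hr⟩ := hab u hu hcd
      simp only [hχdef, Set.indicator_of_mem hmem, mul_one]
      exact ⟨hl, hr⟩
    · simp only [hχdef, Set.indicator_of_notMem hmem, mul_zero, le_refl, and_self]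
  have hχint : IntervalIntegrable χ volume 0 1 := indicator_intervalIntegrable hSmeas 0 1
  have hindint : IntervalIntegrable (Set.indicator S lam) volume 0 1 := by
    rw [intervalIntegrable_iff_integrableOn_Ioc_of_le zero_le_one]
    apply Integrable.mono' (integrable_const b)
    · exact ((hlam_cont.mono Set.Ioc_subset_Icc_self).aestronglyMeasurable
        measurableSet_Ioc).indicator hSmeas
    · rw [ae_restrict_iff' measurableSet_Ioc]
      filter_upwards with u hu
      have := hpt u (Set.Ioc_subset_Icc_self hu)
      rw [Real.norm_eq_abs]
      by_cases hmem : u ∈ S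
      · rw [Set.indicator_of_mem hmem]
        simp only [hχdef, Set.indicator_of_mem hmem, mul_one] at this
        rw [abs_le]
        exact ⟨by linarith [this.1], this.2⟩
      · rw [Set.indicator_of_notMem hmem]
        simpa using hb
  have hχval : (∫ u in (0:ℝ)..1, χ u) = 2 * d := by
    have hfeq : ∀ u, χ u = Set.indicator (Set.Iio d) (fun _ => (1:ℝ)) (circleDist u x) := by
      intro u
      by_cases hmem : u ∈ S
      · rw [hχdef, Set.indicator_of_mem hmem, Set.indicator_of_mem]
        rw [Set.mem_Iio, circleDist_symm]
        exact hmem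
      · rw [hχdef, Set.indicator_of_notMem hmem, Set.indicator_of_notMem]
        rw [Set.mem_Iio, circleDist_symm]
        exact hmem
    have : (∫ u in (0:ℝ)..1, χ u)
        = ∫ u in (0:ℝ)..1, Set.indicator (Set.Iio d) (fun _ => (1:ℝ)) (circleDist u x) := by
      apply intervalIntegral.integral_congr
      intro u _
      exact hfeq u
    rw [this, integral_circleDist x hx _ ?hint, indicator_integral hd0 hd]
    case hint =>
      have : (fun t => Set.indicator (Set.Iio d) (fun _ => (1:ℝ)) (circleDist t 0))
          = Set.indicator {t | circleDist t 0 < d} (fun _ => (1:ℝ)) := by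
        funext t
        by_cases hmem : circleDist t 0 < d
        · rw [Set.indicator_of_mem (Set.mem_Iio.mpr hmem),
            Set.indicator_of_mem (show t ∈ {t | circleDist t 0 < d} from hmem)]
        · rw [Set.indicator_of_notMem (fun h => hmem (Set.mem_Iio.mp h)),
            Set.indicator_of_notMem (show t ∉ {t | circleDist t 0 < d} from hmem)]
      rw [this]
      exact indicator_intervalIntegrable (measurableSet_ball_left 0 d) _ _
  constructor
  · calc a * (2 * d) = ∫ u in (0:ℝ)..1, a * χ u := by
          rw [intervalIntegral.integral_const_mul, hχval]
    _ ≤ _ := by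
          apply intervalIntegral.integral_mono_on zero_le_one (hχint.const_mul a) hindint
          intro u hu
          exact (hpt u hu).1
  · calc (∫ y' in (0:ℝ)..1, Set.indicator S lam y')
        ≤ ∫ u in (0:ℝ)..1, b * χ u := by
          apply intervalIntegral.integral_mono_on zero_le_one hindint (hχint.const_mul b)
          intro u hu
          exact (hpt u hu).2
    _ = b * (2 * d) := by rw [intervalIntegral.integral_const_mul, hχval]

set_option maxHeartbeats 1000000 in
/-- When frictions are negligible, the size of each firm converges to the mass of
agents that prefer it, even with non-constant meeting rates. -/
theorem size_tendsto_preferences_of_vanishing_frictions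
    (lam ℓ : ℝ → ℝ)
    (hlam_cont : ContinuousOn lam (Set.Icc 0 1))
    (hlam_pos : ∀ y ∈ Set.Icc (0:ℝ) 1, 0 < lam y)
    (hlam_int : (∫ y in (0:ℝ)..1, lam y) = 1)
    (hlam_per : lam 0 = lam 1)
    (hl_cont : ContinuousOn ℓ (Set.Icc 0 1))
    (hl_nonneg : ∀ x ∈ Set.Icc (0:ℝ) 1, 0 ≤ ℓ x)
    (hl_per : ℓ 0 = ℓ 1)
    (L : ℝ → ℝ → ℝ)
    (hL : ∀ x y, L x y =
      ∫ y' in (0:ℝ)..1,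
        Set.indicator {y' : ℝ | circleDist x y' < circleDist x y} lam y')
    (s : ℝ → ℝ → ℝ)
    (hs : ∀ r y, s r y =
      lam y * ∫ x in (0:ℝ)..1, r * (r + 1) * ℓ x / (r + L x y) ^ 2) :
    ∀ y ∈ Set.Icc (0:ℝ) 1,
      Filter.Tendsto (fun r => s r y) (nhdsWithin 0 (Set.Ioi 0)) (nhds (ℓ y)) := by
  intro y hy
  -- global extrema
  obtain ⟨u₀, hu₀, hminlam⟩ := isCompact_Icc.exists_isMinOn
    (Set.nonempty_Icc.mpr zero_le_one) hlam_cont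
  set c : ℝ := lam u₀ with hcdef
  have hc : 0 < c := hlam_pos u₀ hu₀
  have hmin : ∀ u ∈ Set.Icc (0:ℝ) 1, c ≤ lam u := isMinOn_iff.mp hminlam
  obtain ⟨u₂, hu₂, hmaxlam⟩ := isCompact_Icc.exists_isMaxOn
    (Set.nonempty_Icc.mpr zero_le_one) hlam_cont
  set Cl : ℝ := lam u₂ with hCldef
  have hCl : ∀ u ∈ Set.Icc (0:ℝ) 1, lam u ≤ Cl := isMaxOn_iff.mp hmaxlam
  have hCl0 : 0 ≤ Cl := (hlam_pos u₂ hu₂).le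
  obtain ⟨u₁, hu₁, hmaxl⟩ := isCompact_Icc.exists_isMaxOn
    (Set.nonempty_Icc.mpr zero_le_one) hl_cont
  set M : ℝ := ℓ u₁ with hMdef
  have hM : ∀ u ∈ Set.Icc (0:ℝ) 1, ℓ u ≤ M := isMaxOn_iff.mp hmaxl
  have hM0 : 0 ≤ M := hl_nonneg u₁ hu₁
  have hlamy : 0 < lam y := hlam_pos y hy
  have hly0 : 0 ≤ ℓ y := hl_nonneg y hy
  rw [Metric.tendsto_nhds]
  intro ε' hε'
  -- choose ε
  have hφ : Filter.Tendsto (fun e => lam y * ((ℓ y + e) / (lam y - e)))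
      (nhdsWithin 0 (Set.Ioi 0)) (nhds (ℓ y)) := by
    have hca : ContinuousAt (fun e => lam y * ((ℓ y + e) / (lam y - e))) 0 := by
      apply ContinuousAt.mul continuousAt_const
      apply ContinuousAt.div (by fun_prop) (by fun_prop)
      simpa using ne_of_gt hlamy
    have := hca.tendsto.mono_left (nhdsWithin_le_nhds (s := Set.Ioi (0:ℝ)))
    have hval : lam y * ((ℓ y + 0) / (lam y - 0)) = ℓ y := by
      rw [add_zero, sub_zero]
      field_simp
    rwa [hval] at this
  have hψ : Filter.Tendsto (fun e => lam y * (max (ℓ y - e) 0 / (lam y + e)))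
      (nhdsWithin 0 (Set.Ioi 0)) (nhds (ℓ y)) := by
    have hca : ContinuousAt (fun e => lam y * (max (ℓ y - e) 0 / (lam y + e))) 0 := by
      apply ContinuousAt.mul continuousAt_const
      apply ContinuousAt.div (by fun_prop) (by fun_prop)
      simpa using ne_of_gt hlamy
    have := hca.tendsto.mono_left (nhdsWithin_le_nhds (s := Set.Ioi (0:ℝ)))
    have hval : lam y * (max (ℓ y - 0) 0 / (lam y + 0)) = ℓ y := by
      rw [sub_zero, add_zero, max_eq_left hly0]
      field_simp
    rwa [hval] at this
  have h1 := hφ.eventually_lt_const (show ℓ y < ℓ y + ε'/2 by linarith)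
  have h2 := hψ.eventually_const_lt (show ℓ y - ε'/2 < ℓ y by linarith)
  have h3 : ∀ᶠ e in nhdsWithin (0:ℝ) (Set.Ioi 0), e < lam y / 2 := by
    have hid : Filter.Tendsto (fun e : ℝ => e) (nhdsWithin 0 (Set.Ioi 0)) (nhds 0) :=
      Filter.tendsto_id.mono_left (nhdsWithin_le_nhds (s := Set.Ioi (0:ℝ)))
    exact hid.eventually_lt_const (by linarith)
  have h4 : ∀ᶠ e in nhdsWithin (0:ℝ) (Set.Ioi 0), e ∈ Set.Ioi (0:ℝ) :=
    self_mem_nhdsWithin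
  obtain ⟨ε, ⟨hε1, hε2⟩, hε3, hεpos⟩ := ((h1.and h2).and (h3.and h4)).exists
  have hεp : (0:ℝ) < ε := hεpos
  -- δ from uniform continuity on the circle
  obtain ⟨δl, hδl0, hδlh, hδl⟩ := circle_unif_cont hlam_cont hlam_per hy hεp
  obtain ⟨δm, hδm0, hδmh, hδm⟩ := circle_unif_cont hl_cont hl_per hy hεp
  set δ : ℝ := min δl δm with hδdef
  have hδ0 : 0 < δ := lt_min hδl0 hδm0
  have hδlam : ∀ u ∈ Set.Icc (0:ℝ) 1, circleDist u y < δ → |lam u - lam y| ≤ ε :=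
    fun u hu h => hδl u hu (h.trans_le (min_le_left _ _))
  have hδℓ : ∀ u ∈ Set.Icc (0:ℝ) 1, circleDist u y < δ → |ℓ u - ℓ y| ≤ ε :=
    fun u hu h => hδm u hu (h.trans_le (min_le_right _ _))
  set a : ℝ := lam y - ε with hadef
  have ha : 0 < a := by rw [hadef]; linarith
  set b : ℝ := lam y + ε with hbdef
  have hb : 0 < b := by rw [hbdef]; linarith
  set q : ℝ := ℓ y + ε with hqdef
  have hq : 0 ≤ q := by rw [hqdef]; linarith
  set p : ℝ := max (ℓ y - ε) 0 with hpdef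
  have hp : 0 ≤ p := le_max_right _ _
  have hpley : p ≤ ℓ y := max_le (by linarith) hly0
  have habband : ∀ u : ℝ, |lam u - lam y| ≤ ε → a ≤ lam u ∧ lam u ≤ b := by
    intro u h
    have h' := abs_le.mp h
    constructor
    · rw [hadef]; linarith [h'.1]
    · rw [hbdef]; linarith [h'.2]
  have hqband : ∀ x : ℝ, |ℓ x - ℓ y| ≤ ε → ℓ x ≤ q := by
    intro x h
    have h' := abs_le.mp h
    rw [hqdef]; linarith [h'.2]
  have hpband : ∀ x : ℝ, |ℓ x - ℓ y| ≤ ε → 0 ≤ ℓ x → p ≤ ℓ x := by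
    intro x h h0
    have h' := abs_le.mp h
    exact max_le (by linarith [h'.1]) h0
  clear_value c Cl M δ a b q p
  clear hδdef hcdef hCldef hMdef hadef hbdef hqdef hpdef hminlam hmaxlam hmaxl hδl hδm
  -- bounds on L
  have hLglobal : ∀ x ∈ Set.Icc (0:ℝ) 1,
      c * (2 * circleDist x y) ≤ L x y ∧ L x y ≤ Cl * (2 * circleDist x y) := by
    intro x hx
    rw [hL x y]
    exact L_bounds lam hlam_cont hx hy hc.le hCl0 (fun u hu _ => ⟨hmin u hu, hCl u hu⟩)
  have hL0 : ∀ x ∈ Set.Icc (0:ℝ) 1, 0 ≤ L x y := by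
    intro x hx
    have h1 := (hLglobal x hx).1
    have h2 := circleDist_nonneg x y
    nlinarith
  have hLnear : ∀ x ∈ Set.Icc (0:ℝ) 1, circleDist x y ≤ δ/2 →
      a * (2 * circleDist x y) ≤ L x y ∧ L x y ≤ b * (2 * circleDist x y) := by
    intro x hx hxnear
    rw [hL x y]
    refine L_bounds lam hlam_cont hx hy ha.le hb.le ?_
    intro u hu hud
    have hud' : circleDist u y < δ := by linarith
    exact habband u (hδlam u hu hud')
  -- main bound for each r > 0
  have key : ∀ r : ℝ, 0 < r →
      lam y * (p*(r+1)/(r+b) - p*(r*(r+1))/(r + b*δ)^2) ≤ s r y ∧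
      s r y ≤ lam y * (q*(r+1)/(r+a) + M*(r*(r+1))/(r + c*δ)^2) := by
    intro r hr
    have hcd0 : ∀ x : ℝ, 0 ≤ circleDist x y := fun x => circleDist_nonneg x y
    set U : ℝ → ℝ := fun x => r*(r+1)*q/(r + 2*a*circleDist x y)^2 + M*(r*(r+1))/(r + c*δ)^2
      with hUdef
    set V : ℝ → ℝ := fun x => p*(r*(r+1))/(r + 2*b*circleDist x y)^2 - p*(r*(r+1))/(r + b*δ)^2
      with hVdef
    have hrr1 : (0:ℝ) ≤ r*(r+1) := by nlinarith
    -- pointwise upper bound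
    have hptU : ∀ x ∈ Set.Icc (0:ℝ) 1, r * (r + 1) * ℓ x / (r + L x y) ^ 2 ≤ U x := by
      intro x hx
      by_cases hnear : circleDist x y ≤ δ/2
      · obtain ⟨hL1, _⟩ := hLnear x hx hnear
        have hδx : circleDist x y < δ := by linarith
        have hℓub : ℓ x ≤ q := hqband x (hδℓ x hx hδx)
        have step : r * (r + 1) * ℓ x / (r + L x y) ^ 2
            ≤ r*(r+1)*q/(r + 2*a*circleDist x y)^2 := by
          apply div_le_div₀ (mul_nonneg hrr1 hq)
            (mul_le_mul_of_nonneg_left hℓub hrr1)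
            (by have := hcd0 x; positivity)
            (by
              apply pow_le_pow_left₀ (by have := hcd0 x; positivity)
              linarith)
        refine step.trans ?_
        simp only [hUdef]
        have : 0 ≤ M*(r*(r+1))/(r + c*δ)^2 :=
          div_nonneg (mul_nonneg hM0 hrr1) (by positivity)
        linarith
      · push_neg at hnear
        obtain ⟨hL1, _⟩ := hLglobal x hx
        have hcδL : r + c*δ ≤ r + L x y := by nlinarith [hc.le]
        have step : r * (r + 1) * ℓ x / (r + L x y) ^ 2 ≤ r*(r+1)*M/(r + c*δ)^2 := by
          apply div_le_div₀ (mul_nonneg hrr1 hM0)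
            (mul_le_mul_of_nonneg_left (hM x hx) hrr1)
            (by positivity)
            (pow_le_pow_left₀ (by positivity) hcδL 2)

        refine step.trans ?_
        simp only [hUdef]
        have h0 : 0 ≤ r*(r+1)*q/(r + 2*a*circleDist x y)^2 :=
          div_nonneg (mul_nonneg hrr1 hq) (by have := hcd0 x; positivity)
        have heq : r*(r+1)*M/(r + c*δ)^2 = M*(r*(r+1))/(r + c*δ)^2 := by ring
        linarith [heq.le]
    -- pointwise lower bound
    have hptV : ∀ x ∈ Set.Icc (0:ℝ) 1, V x ≤ r * (r + 1) * ℓ x / (r + L x y) ^ 2 := by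
      intro x hx
      by_cases hnear : circleDist x y ≤ δ/2
      · obtain ⟨_, hL2⟩ := hLnear x hx hnear
        have hδx : circleDist x y < δ := by linarith
        have hℓlb : p ≤ ℓ x := hpband x (hδℓ x hx hδx) (hl_nonneg x hx)
        have step : p*(r*(r+1))/(r + 2*b*circleDist x y)^2
            ≤ r * (r + 1) * ℓ x / (r + L x y) ^ 2 := by
          apply div_le_div₀
            (mul_nonneg hrr1 (hp.trans hℓlb))
            (by calc p*(r*(r+1)) ≤ ℓ x*(r*(r+1)) := mul_le_mul_of_nonneg_right hℓlb hrr1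
                _ = r*(r+1)*ℓ x := by ring)
            (by have := hL0 x hx; positivity)
            (by
              apply pow_le_pow_left₀ (by linarith [hL0 x hx])
              linarith)
        simp only [hVdef]
        have h0 : 0 ≤ p*(r*(r+1))/(r + b*δ)^2 :=
          div_nonneg (mul_nonneg hp hrr1) (by positivity)
        linarith
      · push_neg at hnear
        have hKnn : 0 ≤ r * (r + 1) * ℓ x / (r + L x y) ^ 2 :=
          div_nonneg (mul_nonneg hrr1 (hl_nonneg x hx)) (by have := hL0 x hx; positivity)
        have hVle : V x ≤ 0 := by
          simp only [hVdef]
          rw [sub_nonpos]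
          apply div_le_div₀ (mul_nonneg hp hrr1) le_rfl (by positivity)
          apply pow_le_pow_left₀ (by positivity)
          nlinarith [hb.le]
        exact hVle.trans hKnn
    -- integrability
    have hUcont : Continuous U := by
      apply Continuous.add
      · apply Continuous.div continuous_const
        · exact ((continuous_const.add
            (continuous_const.mul (continuous_circleDist_left y))).pow 2)
        · intro x
          have := hcd0 x
          positivity
      · exact continuous_const
    have hVcont : Continuous V := by
      apply Continuous.sub
      · apply Continuous.div continuous_const
        · exact ((continuous_const.add
            (continuous_const.mul (continuous_circleDist_left y))).pow 2)
        · intro x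
          have := hcd0 x
          positivity
      · exact continuous_const
    have hUint : IntervalIntegrable U volume 0 1 := hUcont.intervalIntegrable 0 1
    have hVint : IntervalIntegrable V volume 0 1 := hVcont.intervalIntegrable 0 1
    have hKint : IntervalIntegrable (fun x => r * (r + 1) * ℓ x / (r + L x y) ^ 2) volume 0 1 := by
      have hLm : AEMeasurable (fun x => L x y) (volume.restrict (Set.Ioc (0:ℝ) 1)) := by
        have h := L_measurable lam hlam_cont y
        have heq : (fun x => ∫ y' in (0:ℝ)..1,
            Set.indicator {y' : ℝ | circleDist x y' < circleDist x y} lam y')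
            = fun x => L x y := funext fun x => (hL x y).symm
        rw [heq] at h
        exact h.aemeasurable
      have hℓm : AEMeasurable ℓ (volume.restrict (Set.Ioc (0:ℝ) 1)) :=
        ((hl_cont.mono Set.Ioc_subset_Icc_self).aestronglyMeasurable
          measurableSet_Ioc).aemeasurable
      rw [intervalIntegrable_iff_integrableOn_Ioc_of_le zero_le_one]
      apply Integrable.mono' (integrable_const (r*(r+1)*M/r^2))
      · exact ((aemeasurable_const.mul hℓm).div
          ((aemeasurable_const.add hLm).pow_const 2)).aestronglyMeasurable
      · rw [ae_restrict_iff' measurableSet_Ioc]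
        filter_upwards with x hx
        have hx' : x ∈ Set.Icc (0:ℝ) 1 := Set.Ioc_subset_Icc_self hx
        have hKnn : 0 ≤ r * (r + 1) * ℓ x / (r + L x y) ^ 2 :=
          div_nonneg (mul_nonneg hrr1 (hl_nonneg x hx')) (by have := hL0 x hx'; positivity)
        rw [Real.norm_eq_abs, abs_of_nonneg hKnn]
        apply div_le_div₀ (mul_nonneg hrr1 hM0)
          (mul_le_mul_of_nonneg_left (hM x hx') hrr1)
          (by positivity)
          (pow_le_pow_left₀ hr.le (by linarith [hL0 x hx']) 2)
    -- value of ∫ U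
    have hkernint : ∀ A B : ℝ, 0 < A → 0 ≤ B → IntervalIntegrable
        (fun t => B*(r*(r+1))/(r + 2*A*circleDist t 0)^2) volume (-1) 1 := by
      intro A B hA hB
      apply Continuous.intervalIntegrable
      apply Continuous.div continuous_const
      · exact ((continuous_const.add
          (continuous_const.mul (continuous_circleDist_left 0))).pow 2)
      · intro t
        have := circleDist_nonneg t 0
        positivity
    have hkernval : ∀ A B : ℝ, 0 < A → 0 ≤ B →
        (∫ x in (0:ℝ)..1, B*(r*(r+1))/(r + 2*A*circleDist x y)^2) = B*(r+1)/(r+A) := by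
      intro A B hA hB
      have := integral_circleDist y hy (fun t => B*(r*(r+1))/(r + 2*A*t)^2)
        (hkernint A B hA hB)
      rw [this]
      have hcongr : (∫ t in (0:ℝ)..(1/2), B*(r*(r+1))/(r + 2*A*t)^2)
          = ∫ t in (0:ℝ)..(1/2), B * (r*(r+1)/(r + 2*A*t)^2) := by
        apply intervalIntegral.integral_congr
        intro t _
        ring
      rw [hcongr, intervalIntegral.integral_const_mul, kernel_antideriv hA hr]
      have h1 : (0:ℝ) < r + A := by linarith
      field_simp
    have hUval : (∫ x in (0:ℝ)..1, U x) = q*(r+1)/(r+a) + M*(r*(r+1))/(r + c*δ)^2 := by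
      have hsplit : (∫ x in (0:ℝ)..1, U x)
          = (∫ x in (0:ℝ)..1, r*(r+1)*q/(r + 2*a*circleDist x y)^2)
            + ∫ x in (0:ℝ)..1, (fun _ => M*(r*(r+1))/(r + c*δ)^2) x := by
        rw [← intervalIntegral.integral_add
          (by
            apply Continuous.intervalIntegrable
            apply Continuous.div continuous_const
            · exact ((continuous_const.add
                (continuous_const.mul (continuous_circleDist_left y))).pow 2)
            · intro x
              have := hcd0 x
              positivity)
          intervalIntegrable_const]
      rw [hsplit]
      have he : (∫ x in (0:ℝ)..1, r*(r+1)*q/(r + 2*a*circleDist x y)^2)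
          = ∫ x in (0:ℝ)..1, q*(r*(r+1))/(r + 2*a*circleDist x y)^2 := by
        apply intervalIntegral.integral_congr
        intro t _
        ring
      rw [he, hkernval a q ha hq]
      simp
    have hVval : (∫ x in (0:ℝ)..1, V x) = p*(r+1)/(r+b) - p*(r*(r+1))/(r + b*δ)^2 := by
      have hsplit : (∫ x in (0:ℝ)..1, V x)
          = (∫ x in (0:ℝ)..1, p*(r*(r+1))/(r + 2*b*circleDist x y)^2)
            - ∫ x in (0:ℝ)..1, (fun _ => p*(r*(r+1))/(r + b*δ)^2) x := by
        rw [← intervalIntegral.integral_sub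
          (by
            apply Continuous.intervalIntegrable
            apply Continuous.div continuous_const
            · exact ((continuous_const.add
                (continuous_const.mul (continuous_circleDist_left y))).pow 2)
            · intro x
              have := hcd0 x
              positivity)
          intervalIntegrable_const]
      rw [hsplit, hkernval b p hb hp]
      simp
    have hIlow : (∫ x in (0:ℝ)..1, V x)
        ≤ ∫ x in (0:ℝ)..1, r * (r + 1) * ℓ x / (r + L x y) ^ 2 :=
      intervalIntegral.integral_mono_on zero_le_one hVint hKint hptV
    have hIhigh : (∫ x in (0:ℝ)..1, r * (r + 1) * ℓ x / (r + L x y) ^ 2)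
        ≤ ∫ x in (0:ℝ)..1, U x :=
      intervalIntegral.integral_mono_on zero_le_one hKint hUint hptU
    rw [hs r y]
    rw [hUval] at hIhigh
    rw [hVval] at hIlow
    constructor
    · exact mul_le_mul_of_nonneg_left hIlow hlamy.le
    · exact mul_le_mul_of_nonneg_left hIhigh hlamy.le
  -- limits of the explicit bounds
  have hane : (0:ℝ) + a ≠ 0 := by rw [zero_add]; exact ha.ne'
  have hcδ : (0:ℝ) < c*δ := by positivity
  have hbδ : (0:ℝ) < b*δ := by positivity
  have hHiT : Filter.Tendsto
      (fun r => lam y * (q*(r+1)/(r+a) + M*(r*(r+1))/(r + c*δ)^2))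
      (nhdsWithin 0 (Set.Ioi 0)) (nhds (lam y * (q/a))) := by
    have hca : ContinuousAt
        (fun r : ℝ => lam y * (q*(r+1)/(r+a) + M*(r*(r+1))/(r + c*δ)^2)) 0 := by
      apply ContinuousAt.mul continuousAt_const
      apply ContinuousAt.add
      · exact ContinuousAt.div (by fun_prop) (by fun_prop) hane
      · refine ContinuousAt.div (by fun_prop) (by fun_prop) ?_
        have : (0:ℝ) < ((0:ℝ) + c*δ)^2 := by rw [zero_add]; positivity
        exact this.ne'
    have ht := hca.tendsto.mono_left (nhdsWithin_le_nhds (s := Set.Ioi (0:ℝ)))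
    have hv : lam y * (q*(0+1)/(0+a) + M*(0*(0+1))/((0:ℝ) + c*δ)^2) = lam y * (q/a) := by
      rw [zero_add]
      norm_num
    rwa [hv] at ht
  have hLoT : Filter.Tendsto
      (fun r => lam y * (p*(r+1)/(r+b) - p*(r*(r+1))/(r + b*δ)^2))
      (nhdsWithin 0 (Set.Ioi 0)) (nhds (lam y * (p/b))) := by
    have hca : ContinuousAt
        (fun r : ℝ => lam y * (p*(r+1)/(r+b) - p*(r*(r+1))/(r + b*δ)^2)) 0 := by
      apply ContinuousAt.mul continuousAt_const
      apply ContinuousAt.sub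
      · refine ContinuousAt.div (by fun_prop) (by fun_prop) ?_
        rw [zero_add]; exact hb.ne'
      · refine ContinuousAt.div (by fun_prop) (by fun_prop) ?_
        have : (0:ℝ) < ((0:ℝ) + b*δ)^2 := by rw [zero_add]; positivity
        exact this.ne'
    have ht := hca.tendsto.mono_left (nhdsWithin_le_nhds (s := Set.Ioi (0:ℝ)))
    have hv : lam y * (p*(0+1)/(0+b) - p*(0*(0+1))/((0:ℝ) + b*δ)^2) = lam y * (p/b) := by
      rw [zero_add]
      norm_num
    rwa [hv] at ht
  have hHiev := hHiT.eventually_lt_const (show lam y * (q/a) < ℓ y + ε' by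
    have := hε1
    linarith)
  have hLoev := hLoT.eventually_const_lt (show ℓ y - ε' < lam y * (p/b) by
    have := hε2
    linarith)
  filter_upwards [hHiev, hLoev, self_mem_nhdsWithin] with r hru hrl hrmem
  obtain ⟨k1, k2⟩ := key r hrmem
  rw [Real.dist_eq, abs_sub_lt_iff]
  constructor <;> linarith
end

section
/- Theorem 1, part (i) (homogenizing regime): let α ∈ [0,1), μ > 0, λ_tot > 0, r_f = μ/λ_tot, and define λ_A(s) = ((1−α)/2 + α·s)·λ_tot, λ_B(s) = ((1−α)/2 + α·(1−s))·λ_tot, and p_a(s) = λ_tot·(μ+λ_A(s))·((μ+λ_B(s))·s − λ_A(s)·μ/λ_tot) / (λ_A(s)·λ_B(s)·(2μ+λ_tot)) for s ∈ [0,1] (the preference share consistent with equilibrium share s). If r_f ≥ (α − 1/2)/(1−α), then p_a(s) ≥ s for every s ∈ [1/2, 1]; equivalently, any equilibrium market share s_A ∈ [1/2,1] satisfies s_A ≤ p_a, so frictions have a homogenizing effect. -/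
/-- Theorem 1, part (i) (homogenizing regime): if `r_f ≥ (α - 1/2)/(1 - α)`,
then the preference share consistent with any equilibrium share `s ∈ [1/2, 1]`
satisfies `p_a(s) ≥ s`: frictions have a homogenizing effect. -/
theorem homogenizing_regime
    (α μ lamtot rf : ℝ)
    (hα : α ∈ Set.Ico (0:ℝ) 1) (hμ : 0 < μ) (hlamtot : 0 < lamtot)
    (hrf : rf = μ / lamtot)
    (lamA lamB pa : ℝ → ℝ)
    (hlamA : ∀ s, lamA s = ((1 - α) / 2 + α * s) * lamtot)
    (hlamB : ∀ s, lamB s = ((1 - α) / 2 + α * (1 - s)) * lamtot)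
    (hpa : ∀ s, pa s =
      lamtot * (μ + lamA s) * ((μ + lamB s) * s - lamA s * μ / lamtot) /
        (lamA s * lamB s * (2 * μ + lamtot)))
    (hcond : (α - 1/2) / (1 - α) ≤ rf) :
    ∀ s ∈ Set.Icc (1/2 : ℝ) 1, s ≤ pa s := by
  obtain ⟨hα0, hα1⟩ := hα
  intro s hs
  obtain ⟨hs1, hs2⟩ := hs
  have h1α : (0:ℝ) < 1 - α := by linarith
  have hu : (0:ℝ) ≤ s - 1/2 := by linarith
  -- positivity of the pieces
  have hA : lamA s = ((1 - α) / 2 + α * s) * lamtot := hlamA s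
  have hB : lamB s = ((1 - α) / 2 + α * (1 - s)) * lamtot := hlamB s
  have hApos : 0 < lamA s := by
    rw [hA]
    have : 0 < (1 - α) / 2 + α * s := by nlinarith
    positivity
  have hBpos : 0 < lamB s := by
    rw [hB]
    have : 0 < (1 - α) / 2 + α * (1 - s) := by nlinarith
    positivity
  have hD : 0 < lamA s * lamB s * (2 * μ + lamtot) := by
    have : 0 < 2 * μ + lamtot := by linarith
    positivity
  -- key consequence of the friction condition
  have h1 : (α - 1/2) * lamtot ≤ μ * (1 - α) := by
    rw [hrf] at hcond
    rw [div_le_div_iff₀ h1α hlamtot] at hcond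
    nlinarith
  have h2 : (α - 1/2) * lamtot * ((s - 1/2) * lamtot) ≤
      μ * (1 - α) * ((s - 1/2) * lamtot) :=
    mul_le_mul_of_nonneg_right h1 (by positivity)
  have h3 : (0:ℝ) ≤ 2 * α ^ 2 * (s - 1/2) ^ 3 * lamtot ^ 2 := by positivity
  rw [hpa s, le_div_iff₀ hD, hA, hB]
  have hcancel : ((1 - α) / 2 + α * s) * lamtot * μ / lamtot
      = ((1 - α) / 2 + α * s) * μ := by
    field_simp
  rw [hcancel]
  nlinarith [mul_le_mul_of_nonneg_left h2 hμ.le, mul_nonneg hμ.le h3]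
end

section
/- Theorem 1, part (ii) (accentuating regime): let α ∈ [0,1), μ > 0, λ_tot > 0, r_f = μ/λ_tot, and define λ_A(s) = ((1−α)/2 + α·s)·λ_tot, λ_B(s) = ((1−α)/2 + α·(1−s))·λ_tot, and p_a(s) = λ_tot·(μ+λ_A(s))·((μ+λ_B(s))·s − λ_A(s)·μ/λ_tot) / (λ_A(s)·λ_B(s)·(2μ+λ_tot)) for s ∈ [0,1]. If r_f < (α − 1/2)/(1−α), then there exists s ∈ (1/2, 1] with p_a(s) < s; that is, frictions accentuate existing inequalities for at least some preference share. -/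
set_option maxHeartbeats 1000000


/-- Theorem 1, part (ii) (accentuating regime): if `r_f < (α - 1/2)/(1 - α)`,
then there exists an equilibrium share `s ∈ (1/2, 1]` with `p_a(s) < s`:
frictions accentuate existing inequalities for some preference share. -/
theorem accentuating_regime
    (α μ lamtot rf : ℝ)
    (hα : α ∈ Set.Ico (0:ℝ) 1) (hμ : 0 < μ) (hlamtot : 0 < lamtot)
    (hrf : rf = μ / lamtot)
    (lamA lamB pa : ℝ → ℝ)
    (hlamA : ∀ s, lamA s = ((1 - α) / 2 + α * s) * lamtot)
    (hlamB : ∀ s, lamB s = ((1 - α) / 2 + α * (1 - s)) * lamtot)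
    (hpa : ∀ s, pa s =
      lamtot * (μ + lamA s) * ((μ + lamB s) * s - lamA s * μ / lamtot) /
        (lamA s * lamB s * (2 * μ + lamtot)))
    (hcond : rf < (α - 1/2) / (1 - α)) :
    ∃ s ∈ Set.Ioc (1/2 : ℝ) 1, pa s < s := by
  obtain ⟨hα0, hα1⟩ := hα
  have h1α : (0:ℝ) < 1 - α := by linarith
  have hrfpos : 0 < rf := by rw [hrf]; positivity
  have hαhalf : (1:ℝ)/2 < α := by
    by_contra h
    push_neg at h
    have : (α - 1/2) / (1 - α) ≤ 0 :=
      div_nonpos_of_nonpos_of_nonneg (by linarith) (by linarith)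
    linarith
  have hαpos : 0 < α := by linarith
  obtain ⟨K, hK⟩ : ∃ K : ℝ, K = (2*α - 1) * lamtot / 2 - (1 - α) * μ := ⟨_, rfl⟩
  have hKpos : 0 < K := by
    rw [hrf] at hcond
    have := (div_lt_div_iff₀ hlamtot h1α).mp hcond
    rw [hK]; nlinarith
  have hKlt : K < lamtot * α^2 := by
    rw [hK]
    nlinarith [mul_nonneg hlamtot.le (sq_nonneg (α - 1/2)), mul_pos hμ h1α]
  obtain ⟨t, ht⟩ : ∃ t : ℝ, t = K / (4 * lamtot * α^2) := ⟨_, rfl⟩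
  have htpos : 0 < t := by rw [ht]; positivity
  have hKt : K = t * (4 * lamtot * α^2) := by
    rw [ht]; field_simp
  have htlt : t < 1/4 := by
    rw [ht, div_lt_iff₀ (by positivity)]
    nlinarith
  obtain ⟨s, hs⟩ : ∃ s : ℝ, s = 1/2 + t := ⟨_, rfl⟩
  refine ⟨s, ⟨by rw [hs]; linarith, by rw [hs]; linarith⟩, ?_⟩
  have hAarg : 0 < (1 - α) / 2 + α * s := by
    have : 0 < α * s := by rw [hs]; positivity
    linarith
  have hBarg : 0 < (1 - α) / 2 + α * (1 - s) := by
    have : 0 < α * (1 - s) := by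
      apply mul_pos hαpos
      rw [hs]; linarith
    linarith
  have hApos : 0 < lamA s := by rw [hlamA]; positivity
  have hBpos : 0 < lamB s := by rw [hlamB]; positivity
  have hD : 0 < lamA s * lamB s * (2 * μ + lamtot) := by positivity
  rw [hpa, div_lt_iff₀ hD]
  have hid : s * (lamA s * lamB s * (2 * μ + lamtot)) -
      lamtot * (μ + lamA s) * ((μ + lamB s) * s - lamA s * μ / lamtot)
      = lamtot * μ * t * (K - 2 * lamtot * α^2 * t^2) := by
    rw [hlamA, hlamB, hs, hK]
    field_simp
    ring
  have h2 : 0 < K - 2 * lamtot * α^2 * t^2 := by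
    rw [hKt]
    nlinarith [mul_pos (mul_pos hlamtot (pow_pos hαpos 2)) htpos]
  nlinarith [mul_pos (mul_pos (mul_pos hlamtot hμ) htpos) h2]
end

section
/- Sign of the derivative at the symmetric point: with α ∈ [0,1), μ > 0, λ_tot > 0, r_f = μ/λ_tot, λ_A(s) = ((1−α)/2 + α·s)·λ_tot, λ_B(s) = ((1−α)/2 + α·(1−s))·λ_tot, p_a(s) = λ_tot·(μ+λ_A(s))·((μ+λ_B(s))·s − λ_A(s)·μ/λ_tot)/(λ_A(s)·λ_B(s)·(2μ+λ_tot)), and f(s) = p_a(s) − s, the function f is differentiable at s = 1/2 and f'(1/2) has the same sign as r_f²(1−α) − r_f(α − 1/2) = r_f·((1−α)·r_f − (α − 1/2)); in particular f'(1/2) ≥ 0 if and only if r_f ≥ (α−1/2)/(1−α). -/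
/-- Sign of the derivative of `f(s) = p_a(s) - s` at the symmetric point `s = 1/2`:
`f` is differentiable at `1/2` and `f'(1/2)` has the same sign as
`r_f ((1-α) r_f - (α - 1/2))`; in particular `f'(1/2) ≥ 0 ↔ r_f ≥ (α-1/2)/(1-α)`. -/
theorem derivative_sign_at_half
    (α μ lamtot rf : ℝ)
    (hα : α ∈ Set.Ico (0:ℝ) 1) (hμ : 0 < μ) (hlamtot : 0 < lamtot)
    (hrf : rf = μ / lamtot)
    (lamA lamB pa f : ℝ → ℝ)
    (hlamA : ∀ s, lamA s = ((1 - α) / 2 + α * s) * lamtot)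
    (hlamB : ∀ s, lamB s = ((1 - α) / 2 + α * (1 - s)) * lamtot)
    (hpa : ∀ s, pa s =
      lamtot * (μ + lamA s) * ((μ + lamB s) * s - lamA s * μ / lamtot) /
        (lamA s * lamB s * (2 * μ + lamtot)))
    (hf : ∀ s, f s = pa s - s) :
    DifferentiableAt ℝ f (1/2) ∧
    (0 < deriv f (1/2) ↔ 0 < rf * ((1 - α) * rf - (α - 1/2))) ∧
    (deriv f (1/2) = 0 ↔ rf * ((1 - α) * rf - (α - 1/2)) = 0) ∧
    (deriv f (1/2) < 0 ↔ rf * ((1 - α) * rf - (α - 1/2)) < 0) ∧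
    (0 ≤ deriv f (1/2) ↔ (α - 1/2) / (1 - α) ≤ rf) := by
  obtain ⟨hα0, hα1⟩ := hα
  have hfg : f = fun s =>
      lamtot * (μ + ((1 - α) / 2 + α * s) * lamtot) *
        ((μ + ((1 - α) / 2 + α * (1 - s)) * lamtot) * s -
          ((1 - α) / 2 + α * s) * lamtot * μ / lamtot) /
        (((1 - α) / 2 + α * s) * lamtot * (((1 - α) / 2 + α * (1 - s)) * lamtot) *
          (2 * μ + lamtot)) - s := by
    funext s; rw [hf, hpa, hlamA, hlamB]
  set T := rf * ((1 - α) * rf - (α - 1/2)) with hT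
  have hA : HasDerivAt (fun s : ℝ => ((1 - α) / 2 + α * s) * lamtot)
      (α * lamtot) (1/2) := by
    simpa using (((hasDerivAt_id (1/2 : ℝ)).const_mul α).const_add
      ((1 - α) / 2)).mul_const lamtot
  have hB : HasDerivAt (fun s : ℝ => ((1 - α) / 2 + α * (1 - s)) * lamtot)
      (-α * lamtot) (1/2) := by
    have h1 : HasDerivAt (fun s : ℝ => (1 : ℝ) - s) (-1) (1/2) := by
      simpa using (hasDerivAt_id (1/2 : ℝ)).const_sub 1
    simpa using ((h1.const_mul α).const_add ((1 - α) / 2)).mul_const lamtot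
  have hnum := ((hA.const_add μ).const_mul lamtot).mul
    (((hB.const_add μ).mul (hasDerivAt_id (1/2 : ℝ))).sub
      ((hA.mul_const μ).div_const lamtot))
  have hden := (hA.mul hB).mul_const (2 * μ + lamtot)
  have hα1' : (0:ℝ) < 1 - α := by linarith
  have hne : (((1 - α) / 2 + α * (1/2 : ℝ)) * lamtot *
      (((1 - α) / 2 + α * (1 - 1/2)) * lamtot) * (2 * μ + lamtot)) ≠ 0 := by
    have h12 : ((1 - α) / 2 + α * (1/2 : ℝ)) = 1/2 := by ring
    have h12' : ((1 - α) / 2 + α * (1 - 1/2 : ℝ)) = 1/2 := by ring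
    rw [h12, h12']
    positivity
  have hq := (hnum.div hden hne).sub (hasDerivAt_id (1/2 : ℝ))
  rw [hfg]
  have hk : (0:ℝ) < 4 * lamtot / (2 * μ + lamtot) := by positivity
  have hder : HasDerivAt (fun s =>
      lamtot * (μ + ((1 - α) / 2 + α * s) * lamtot) *
        ((μ + ((1 - α) / 2 + α * (1 - s)) * lamtot) * s -
          ((1 - α) / 2 + α * s) * lamtot * μ / lamtot) /
        (((1 - α) / 2 + α * s) * lamtot * (((1 - α) / 2 + α * (1 - s)) * lamtot) *
          (2 * μ + lamtot)) - s) (4 * lamtot / (2 * μ + lamtot) * T) (1/2) := by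
    convert hq using 1
    · rfl
    · rfl
    · rfl
    simp only [Pi.mul_apply, Pi.sub_apply, id]
    rw [hT, hrf]
    have hμL : (2 * μ + lamtot) ≠ 0 := by positivity
    have hL : lamtot ≠ 0 := ne_of_gt hlamtot
    field_simp
    ring
  have hd := hder.deriv
  refine ⟨hder.differentiableAt, ?_, ?_, ?_, ?_⟩
  · rw [hd]
    constructor
    · intro h; nlinarith
    · intro h; positivity
  · rw [hd]
    constructor
    · intro h
      rcases mul_eq_zero.mp h with h' | h'
      · exact absurd h' (ne_of_gt hk)
      · exact h'
    · intro h; rw [h, mul_zero]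
  · rw [hd]
    constructor
    · intro h; nlinarith
    · intro h
      have := mul_neg_of_pos_of_neg hk h
      linarith
  · rw [hd]
    have hrf0 : 0 < rf := by rw [hrf]; positivity
    have key : (0 ≤ T) ↔ ((α - 1/2) / (1 - α) ≤ rf) := by
      rw [hT, div_le_iff₀ hα1']
      constructor
      · intro h; nlinarith
      · intro h; nlinarith
    rw [← key]
    constructor
    · intro h; nlinarith
    · intro h; positivity
end

section
/- With constant meeting rates, frictions reduce the variance of the firm size distribution: let r > 0, let ℓ : [0,1] → ℝ be square-integrable, and define s(y) = ∫₀¹ r(r+1)·ℓ(x)/(r + 2·d(x,y))² dx, where d(x,y) = min_{k∈ℤ} |x − y + k|. Then ∫₀¹ s(y) dy = ∫₀¹ ℓ(x) dx, and ∫₀¹ (s(y) − m)² dy ≤ ∫₀¹ (ℓ(x) − m)² dx where m = ∫₀¹ ℓ; that is, Var_y(s(y)) ≤ Var_x(ℓ(x)). -/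
open MeasureTheory

lemma circleDist_eq (x y : ℝ) : circleDist x y = |x - y - round (x - y)| := by
  set u := x - y with hu
  have hbdd : BddBelow {v : ℝ | ∃ k : ℤ, v = |u + (k : ℝ)|} := by
    refine ⟨0, ?_⟩
    rintro v ⟨k, rfl⟩
    positivity
  have hne : {v : ℝ | ∃ k : ℤ, v = |u + (k : ℝ)|}.Nonempty :=
    ⟨|u + ((0 : ℤ) : ℝ)|, 0, rfl⟩
  show sInf {v : ℝ | ∃ k : ℤ, v = |u + (k : ℝ)|} = |u - round u|
  apply le_antisymm
  · refine csInf_le hbdd ⟨-round u, ?_⟩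
    push_cast
    ring_nf
  · apply le_csInf hne
    rintro v ⟨k, rfl⟩
    by_cases hk : k = -round u
    · subst hk
      push_cast
      apply le_of_eq
      ring_nf
    · have h1 : |u - round u| ≤ 1 / 2 := abs_sub_round u
      have h2 : (1 : ℝ) ≤ |((round u : ℤ) : ℝ) + (k : ℝ)| := by
        have hne0 : (round u : ℤ) + k ≠ 0 := by
          intro h
          apply hk
          omega
        have := Int.one_le_abs hne0
        have : ((1 : ℤ) : ℝ) ≤ ((|round u + k| : ℤ) : ℝ) := by exact_mod_cast this
        simpa [Int.cast_abs] using this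
      have h3 : |((round u : ℤ) : ℝ) + (k : ℝ)| ≤ |u + k| + |u - round u| := by
        have heq : ((round u : ℤ) : ℝ) + (k : ℝ) = (u + k) + (round u - u) := by ring
        rw [heq]
        calc |(u + k) + ((round u : ℝ) - u)| ≤ |u + k| + |(round u : ℝ) - u| := abs_add_le _ _
          _ = |u + k| + |u - round u| := by rw [abs_sub_comm]
      linarith
  done

lemma roundAbs_continuous : Continuous fun u : ℝ => |u - round u| := by
  have h : (fun u : ℝ => |u - round u|) = fun u : ℝ => ‖((u : ℝ) : UnitAddCircle)‖ := by
    funext u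
    rw [UnitAddCircle.norm_eq]
  rw [h]
  exact continuous_norm.comp (AddCircle.continuous_mk' _)

lemma roundAbs_periodic : Function.Periodic (fun u : ℝ => |u - round u|) 1 := by
  intro u
  have : u + 1 - ((round (u + 1) : ℤ) : ℝ) = u - round u := by
    rw [round_add_one]; push_cast; ring
  simp only [this]

lemma roundAbs_eq_left {u : ℝ} (h0 : 0 ≤ u) (h1 : u ≤ 1 / 2) : |u - round u| = u := by
  rcases eq_or_lt_of_le h1 with heq | hlt
  · rw [heq]
    norm_num [round_eq]
  · have hr : round u = 0 := by
      rw [round_eq]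
      apply Int.floor_eq_zero_iff.mpr
      constructor <;> simp <;> linarith
    rw [hr]
    simpa using abs_of_nonneg h0
  done

lemma roundAbs_eq_right {u : ℝ} (h0 : 1 / 2 ≤ u) (h1 : u ≤ 1) : |u - round u| = 1 - u := by
  have hr : round u = 1 := by
    rw [round_eq]
    have : ⌊u + 1 / 2⌋ = 1 := by
      apply Int.floor_eq_iff.mpr <;> norm_num <;> constructor <;> linarith
    exact this
  rw [hr]
  push_cast
  rw [abs_sub_comm]
  exact abs_of_nonneg (by linarith)

/-- The kernel integrates to one over a period. -/
lemma kernel_integral_one (r : ℝ) (hr : 0 < r) (c : ℝ) :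
    ∫ x in (0:ℝ)..1, r * (r + 1) / (r + 2 * circleDist x c) ^ 2 = 1 := by
  set f : ℝ → ℝ := fun u => r * (r + 1) / (r + 2 * |u - round u|) ^ 2 with hf
  have hden : ∀ u : ℝ, (0:ℝ) < r + 2 * |u - round u| := fun u => by
    have := abs_nonneg (u - round u); linarith
  have hfc : Continuous f := by
    apply Continuous.div continuous_const
    · exact ((continuous_const.add (continuous_const.mul roundAbs_continuous)).pow 2)
    · intro u
      exact pow_ne_zero _ (ne_of_gt (hden u))
  have hper : Function.Periodic f 1 := by
    intro u
    have h : |u + 1 - ((round (u + 1) : ℤ) : ℝ)| = |u - ((round u : ℤ) : ℝ)| :=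
      roundAbs_periodic u
    simp only [hf, h]
  have step1 : (∫ x in (0:ℝ)..1, r * (r + 1) / (r + 2 * circleDist x c) ^ 2)
      = ∫ x in (0:ℝ)..1, f (x - c) := by
    apply intervalIntegral.integral_congr
    intro x _
    simp only [hf, circleDist_eq]
  rw [step1, intervalIntegral.integral_comp_sub_right f c]
  have step2 : (∫ x in (0:ℝ) - c..1 - c, f x) = ∫ x in (0:ℝ)..1, f x := by
    have h := hper.intervalIntegral_add_eq (-c) 0
    simpa [sub_eq_add_neg, add_comm] using h
  rw [step2]
  -- now compute ∫ 0..1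
  have hK : ∀ a b : ℝ, 0 ≤ a → 0 ≤ b →
      (∫ x in a..b, r * (r + 1) / (r + 2 * x) ^ 2)
        = r * (r + 1) / (2 * (r + 2 * a)) - r * (r + 1) / (2 * (r + 2 * b)) := by
    intro a b ha hb
    have hderiv : ∀ t ∈ Set.uIcc a b,
        HasDerivAt (fun t => -(r * (r + 1)) / (2 * (r + 2 * t)))
          (r * (r + 1) / (r + 2 * t) ^ 2) t := by
      intro t ht
      have htnn : 0 ≤ t := by
        rcases Set.mem_uIcc.mp ht with ⟨h1, _⟩ | ⟨h1, _⟩ <;> linarith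
      have hdpos : 0 < r + 2 * t := by linarith
      have h1 : HasDerivAt (fun t : ℝ => 2 * (r + 2 * t)) 4 t := by
        have h0 : HasDerivAt (fun t : ℝ => r + 2 * t) 2 t := by
          simpa using ((hasDerivAt_id t).const_mul (2 : ℝ)).const_add r
        have := h0.const_mul (2 : ℝ)
        norm_num at this
        exact this
      have h2 := (hasDerivAt_const t (-(r * (r + 1)))).div h1 (by positivity)
      refine HasDerivAt.congr_deriv h2 ?_
      rw [div_eq_div_iff (pow_ne_zero _ (mul_pos two_pos hdpos).ne') (pow_ne_zero _ hdpos.ne')]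
      ring
    have hint : IntervalIntegrable (fun x => r * (r + 1) / (r + 2 * x) ^ 2) volume a b := by
      apply ContinuousOn.intervalIntegrable
      apply ContinuousOn.div continuousOn_const
      · fun_prop
      · intro t ht
        have htnn : 0 ≤ t := by
          rcases Set.mem_uIcc.mp ht with ⟨h1, _⟩ | ⟨h1, _⟩ <;> linarith
        have : 0 < r + 2 * t := by linarith
        positivity
    rw [intervalIntegral.integral_eq_sub_of_hasDerivAt hderiv hint]
    have h1 : (0:ℝ) < 2 * (r + 2 * a) := by linarith
    have h2 : (0:ℝ) < 2 * (r + 2 * b) := by linarith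
    field_simp
    ring
  have hint1 : IntervalIntegrable f volume 0 (1 / 2) := hfc.intervalIntegrable _ _
  have hint2 : IntervalIntegrable f volume (1 / 2) 1 := hfc.intervalIntegrable _ _
  rw [← intervalIntegral.integral_add_adjacent_intervals hint1 hint2]
  have p1 : (∫ x in (0:ℝ)..(1 / 2), f x)
      = ∫ x in (0:ℝ)..(1 / 2), r * (r + 1) / (r + 2 * x) ^ 2 := by
    apply intervalIntegral.integral_congr
    intro x hx
    rw [Set.uIcc_of_le (by norm_num : (0:ℝ) ≤ 1 / 2)] at hx
    simp only [hf, roundAbs_eq_left hx.1 hx.2]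
  have p2 : (∫ x in (1 / 2 : ℝ)..1, f x)
      = ∫ x in (1 / 2 : ℝ)..1, r * (r + 1) / (r + 2 * (1 - x)) ^ 2 := by
    apply intervalIntegral.integral_congr
    intro x hx
    rw [Set.uIcc_of_le (by norm_num : (1 / 2 : ℝ) ≤ 1)] at hx
    simp only [hf, roundAbs_eq_right hx.1 hx.2]
  have p2' : (∫ x in (1 / 2 : ℝ)..1, r * (r + 1) / (r + 2 * (1 - x)) ^ 2)
      = ∫ x in (0:ℝ)..(1 / 2), r * (r + 1) / (r + 2 * x) ^ 2 := by
    have h := intervalIntegral.integral_comp_sub_left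
      (a := (1 / 2 : ℝ)) (b := 1) (fun x => r * (r + 1) / (r + 2 * x) ^ 2) 1
    norm_num at h ⊢
    convert h using 2
  rw [p1, p2, p2', hK 0 (1 / 2) le_rfl (by norm_num)]
  have h1 : (0:ℝ) < r + 1 := by linarith
  field_simp
  ring

/-- With constant meeting rates, frictions preserve the mean and reduce the
variance of the firm size distribution. -/
theorem frictions_reduce_variance (r : ℝ) (hr : 0 < r) (ℓ : ℝ → ℝ)
    (hl : MemLp ℓ 2 (volume.restrict (Set.Icc (0:ℝ) 1)))
    (s : ℝ → ℝ)
    (hs : ∀ y, s y =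
      ∫ x in (0:ℝ)..1, r * (r + 1) * ℓ x / (r + 2 * circleDist x y) ^ 2)
    (m : ℝ) (hm : m = ∫ x in (0:ℝ)..1, ℓ x) :
    (∫ y in (0:ℝ)..1, s y) = (∫ x in (0:ℝ)..1, ℓ x) ∧
    (∫ y in (0:ℝ)..1, (s y - m) ^ 2) ≤ ∫ x in (0:ℝ)..1, (ℓ x - m) ^ 2 := by
  classical
  set μ : Measure ℝ := volume.restrict (Set.Ioc (0:ℝ) 1) with hμ
  haveI : IsProbabilityMeasure μ := ⟨by
    rw [hμ, Measure.restrict_apply_univ, Real.volume_Ioc]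
    norm_num⟩
  -- the kernel
  set G : ℝ × ℝ → ℝ := fun p => r * (r + 1) / (r + 2 * circleDist p.1 p.2) ^ 2 with hG
  have hdpos : ∀ p : ℝ × ℝ, 0 < r + 2 * circleDist p.1 p.2 := fun p => by
    have := circleDist_nonneg p.1 p.2; linarith
  have hG0 : ∀ p, 0 ≤ G p := fun p => by
    have h1 := hdpos p
    simp only [hG]
    positivity
  have hGb : ∀ p, G p ≤ (r + 1) / r := by
    intro p
    have h1 := hdpos p
    have h2 := circleDist_nonneg p.1 p.2
    simp only [hG]
    rw [div_le_div_iff₀ (by positivity) hr]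
    nlinarith [mul_nonneg (mul_nonneg (by linarith : (0:ℝ) ≤ r + 1) hr.le) h2,
      mul_nonneg (mul_nonneg (by linarith : (0:ℝ) ≤ r + 1) h2) h2]
  have hGnorm : ∀ p, ‖G p‖ ≤ (r + 1) / r := fun p => by
    rw [Real.norm_eq_abs, abs_of_nonneg (hG0 p)]; exact hGb p
  have hGcont : Continuous G := by
    have hcd : Continuous fun p : ℝ × ℝ => circleDist p.1 p.2 := by
      have : (fun p : ℝ × ℝ => circleDist p.1 p.2)
          = (fun u : ℝ => |u - round u|) ∘ fun p : ℝ × ℝ => p.1 - p.2 := by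
        funext p; simp [circleDist_eq]
      rw [this]
      exact roundAbs_continuous.comp (continuous_fst.sub continuous_snd)
    apply Continuous.div continuous_const ((continuous_const.add (continuous_const.mul hcd)).pow 2)
    intro p
    exact pow_ne_zero _ (ne_of_gt (hdpos p))
  -- kernel normalizations
  have normx : ∀ y : ℝ, ∫ x, G (x, y) ∂μ = 1 := by
    intro y
    have h := kernel_integral_one r hr y
    rwa [intervalIntegral.integral_of_le zero_le_one] at h
  have normy : ∀ x : ℝ, ∫ y, G (x, y) ∂μ = 1 := by
    intro x
    have h : (fun y => G (x, y)) = fun y => G (y, x) := by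
      funext y; simp only [hG, circleDist_symm x y]
    rw [h]
    exact normx x
  -- integrability facts
  have hμle : μ ≤ volume.restrict (Set.Icc (0:ℝ) 1) :=
    Measure.restrict_mono Set.Ioc_subset_Icc_self le_rfl
  have hℓi : Integrable ℓ μ := (hl.integrable one_le_two).mono_measure hμle
  have hℓsq : Integrable (fun x => ℓ x ^ 2) μ := hl.integrable_sq.mono_measure hμle
  have hhi : Integrable (fun x => ℓ x - m) μ := hℓi.sub (integrable_const m)
  have hh2 : Integrable (fun x => (ℓ x - m) ^ 2) μ := by
    have : (fun x => (ℓ x - m) ^ 2)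
        = fun x => (ℓ x ^ 2 - (2 * m) * ℓ x) + m ^ 2 := by funext x; ring
    rw [this]
    exact (hℓsq.sub (hℓi.const_mul _)).add (integrable_const _)
  -- product integrability
  have hfstmp : MeasurePreserving Prod.fst (μ.prod μ) μ := by
    refine ⟨measurable_fst, ?_⟩
    rw [Measure.map_fst_prod]
    simp
  have prodInt : ∀ φ : ℝ → ℝ, Integrable φ μ →
      Integrable (fun p : ℝ × ℝ => G p * φ p.1) (μ.prod μ) := by
    intro φ hφ
    have hcomp : Integrable (fun p : ℝ × ℝ => φ p.1) (μ.prod μ) := by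
      have := (hfstmp.integrable_comp hφ.1).mpr hφ
      exact this
    exact hcomp.bdd_mul hGcont.aestronglyMeasurable (c := (r + 1) / r) (Filter.Eventually.of_forall hGnorm)
  -- fixed-y integrability
  have hGy : ∀ y : ℝ, Continuous fun x => G (x, y) :=
    fun y => hGcont.comp (continuous_id.prodMk continuous_const)
  have intGy : ∀ y : ℝ, Integrable (fun x => G (x, y)) μ := by
    intro y
    have h : IntervalIntegrable (fun x => G (x, y)) volume 0 1 :=
      (hGy y).intervalIntegrable 0 1
    rw [intervalIntegrable_iff_integrableOn_Ioc_of_le zero_le_one] at h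
    exact h
  have intGmul : ∀ (y : ℝ) (φ : ℝ → ℝ), Integrable φ μ →
      Integrable (fun x => G (x, y) * φ x) μ := by
    intro y φ hφ
    exact hφ.bdd_mul (hGy y).aestronglyMeasurable (c := (r + 1) / r) (Filter.Eventually.of_forall fun x => hGnorm (x, y))
  -- the key double integral identity
  have key : ∀ φ : ℝ → ℝ, Integrable φ μ →
      (∫ y, (∫ x, G (x, y) * φ x ∂μ) ∂μ) = ∫ x, φ x ∂μ := by
    intro φ hφ
    have hf : Integrable (Function.uncurry fun x y => G (x, y) * φ x) (μ.prod μ) :=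
      prodInt φ hφ
    have swap := integral_integral_swap (f := fun x y => G (x, y) * φ x) hf
    rw [← swap]
    refine integral_congr_ae (Filter.Eventually.of_forall fun x => ?_)
    show (∫ y, G (x, y) * φ x ∂μ) = φ x
    rw [show (∫ y, G (x, y) * φ x ∂μ) = (∫ y, G (x, y) ∂μ) * φ x from
      integral_mul_const _ _, normy x, one_mul]
  -- rewrite s
  have hsμ : ∀ y, s y = ∫ x, G (x, y) * ℓ x ∂μ := by
    intro y
    rw [hs y, intervalIntegral.integral_of_le zero_le_one]
    refine integral_congr_ae (Filter.Eventually.of_forall fun x => ?_)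
    simp only [hG]
    ring
  have hmμ : m = ∫ x, ℓ x ∂μ := by
    rw [hm, intervalIntegral.integral_of_le zero_le_one]
  constructor
  · -- mean preservation
    rw [intervalIntegral.integral_of_le zero_le_one,
      intervalIntegral.integral_of_le zero_le_one]
    calc ∫ y, s y ∂μ = ∫ y, (∫ x, G (x, y) * ℓ x ∂μ) ∂μ :=
          integral_congr_ae (Filter.Eventually.of_forall fun y => hsμ y)
      _ = ∫ x, ℓ x ∂μ := key ℓ hℓi
  · -- variance reduction
    set h : ℝ → ℝ := fun x => ℓ x - m with hh
    have hsm : ∀ y, s y - m = ∫ x, G (x, y) * h x ∂μ := by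
      intro y
      have e1 : (∫ x, G (x, y) * h x ∂μ)
          = (∫ x, G (x, y) * ℓ x ∂μ) - (∫ x, G (x, y) * m ∂μ) := by
        rw [← integral_sub (intGmul y ℓ hℓi) ((intGy y).mul_const m)]
        refine integral_congr_ae (Filter.Eventually.of_forall fun x => ?_)
        simp only [hh]; ring
      rw [hsμ y, e1, show (∫ x, G (x, y) * m ∂μ) = (∫ x, G (x, y) ∂μ) * m from
        integral_mul_const _ _, normx y, one_mul]
    have jensen : ∀ y, (s y - m) ^ 2 ≤ ∫ x, G (x, y) * h x ^ 2 ∂μ := by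
      intro y
      rw [hsm y]
      set c : ℝ := ∫ x, G (x, y) * h x ∂μ with hc
      have ih1 : Integrable (fun x => G (x, y) * h x) μ := intGmul y h hhi
      have ih2 : Integrable (fun x => G (x, y) * h x ^ 2) μ := intGmul y _ hh2
      have h0 : 0 ≤ ∫ x, G (x, y) * (h x - c) ^ 2 ∂μ :=
        integral_nonneg fun x => mul_nonneg (hG0 _) (sq_nonneg _)
      have hexp : ∫ x, G (x, y) * (h x - c) ^ 2 ∂μ
          = (∫ x, G (x, y) * h x ^ 2 ∂μ) - (2 * c) * c + c ^ 2 * 1 := by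
        have e1 : (fun x => G (x, y) * (h x - c) ^ 2)
            = fun x => (G (x, y) * h x ^ 2 - (2 * c) * (G (x, y) * h x))
                + c ^ 2 * G (x, y) := by funext x; ring
        have iC : Integrable (fun x => (2 * c) * (G (x, y) * h x)) μ := ih1.const_mul _
        have iA : Integrable
            (fun x => G (x, y) * h x ^ 2 - (2 * c) * (G (x, y) * h x)) μ := ih2.sub iC
        have iB : Integrable (fun x => c ^ 2 * G (x, y)) μ := (intGy y).const_mul _
        rw [e1, integral_add iA iB, integral_sub ih2 iC, integral_const_mul,
          integral_const_mul, normx y, ← hc]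
      nlinarith [h0, hexp]
    have hintG2 : Integrable (fun y => ∫ x, G (x, y) * h x ^ 2 ∂μ) μ := by
      have := (prodInt (fun x => h x ^ 2) hh2).integral_prod_right
      exact this
    rw [intervalIntegral.integral_of_le zero_le_one,
      intervalIntegral.integral_of_le zero_le_one]
    calc ∫ y, (s y - m) ^ 2 ∂μ
        ≤ ∫ y, (∫ x, G (x, y) * h x ^ 2 ∂μ) ∂μ :=
          integral_mono_of_nonneg (Filter.Eventually.of_forall fun y => sq_nonneg _)
            hintG2 (Filter.Eventually.of_forall jensen)
      _ = ∫ x, h x ^ 2 ∂μ := key _ hh2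
      _ = ∫ x, (ℓ x - m) ^ 2 ∂μ := rfl
end

section
/- Solution of the steady-state integral equation for the match density (Annex B): let μ > 0, c > 0, let λ : [0,1] → ℝ be continuous and strictly positive, define G(s) = μ + ∫_s¹ λ(t) dt for s ∈ [0,1], and suppose χ : [0,1] → ℝ is continuous and satisfies G(s)·χ(s) = λ(s)·(c + ∫₀^s χ(t) dt) for all s ∈ [0,1]. Then χ(s) = c·G(0)·λ(s)/G(s)² for all s ∈ [0,1] (where G(0) = μ + ∫₀¹ λ). -/
open MeasureTheory Topology Filter

/-- Solution of the steady-state integral equation for the match density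
(Annex B): if `G(s) χ(s) = λ(s) (c + ∫₀ˢ χ)` with `G(s) = μ + ∫ₛ¹ λ`,
then `χ(s) = c G(0) λ(s) / G(s)²`. -/
theorem match_density_closed_form (μ c : ℝ) (hμ : 0 < μ) (hc : 0 < c)
    (lam : ℝ → ℝ)
    (hlam_cont : ContinuousOn lam (Set.Icc 0 1))
    (hlam_pos : ∀ s ∈ Set.Icc (0:ℝ) 1, 0 < lam s)
    (G : ℝ → ℝ) (hG : ∀ s, G s = μ + ∫ t in s..(1:ℝ), lam t)
    (χ : ℝ → ℝ) (hχ_cont : ContinuousOn χ (Set.Icc 0 1))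
    (heq : ∀ s ∈ Set.Icc (0:ℝ) 1,
      G s * χ s = lam s * (c + ∫ t in (0:ℝ)..s, χ t)) :
    ∀ s ∈ Set.Icc (0:ℝ) 1, χ s = c * G 0 * lam s / (G s) ^ 2 := by
  -- Integrability of lam and χ on subintervals of [0,1]
  have hlam_int : ∀ x ∈ Set.Icc (0:ℝ) 1, IntervalIntegrable lam volume x 1 := by
    intro x hx
    apply (hlam_cont.mono ?_).intervalIntegrable
    rw [Set.uIcc_of_le hx.2]
    exact Set.Icc_subset_Icc hx.1 le_rfl
  have hχ_int : ∀ x ∈ Set.Icc (0:ℝ) 1, IntervalIntegrable χ volume 0 x := by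
    intro x hx
    apply (hχ_cont.mono ?_).intervalIntegrable
    rw [Set.uIcc_of_le hx.1]
    exact Set.Icc_subset_Icc le_rfl hx.2
  -- G is positive on [0,1]
  have hGpos : ∀ s ∈ Set.Icc (0:ℝ) 1, 0 < G s := by
    intro s hs
    rw [hG s]
    have : 0 ≤ ∫ t in s..(1:ℝ), lam t := by
      apply intervalIntegral.integral_nonneg hs.2
      intro u hu
      exact (hlam_pos u ⟨le_trans hs.1 hu.1, hu.2⟩).le
    linarith
  -- Continuity of G and of the primitive of χ on [0,1]
  have hGcont : ContinuousOn G (Set.Icc 0 1) := by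
    have h : ContinuousOn (fun x => ∫ t in x..(1:ℝ), lam t) (Set.uIcc (0:ℝ) 1) := by
      apply intervalIntegral.continuousOn_primitive_interval_left
      rw [Set.uIcc_of_le (zero_le_one)]
      exact hlam_cont.integrableOn_compact isCompact_Icc
    have h01 : Set.uIcc (0:ℝ) 1 = Set.Icc 0 1 := Set.uIcc_of_le zero_le_one
    rw [h01] at h
    have : ContinuousOn (fun x => μ + ∫ t in x..(1:ℝ), lam t) (Set.Icc 0 1) :=
      continuousOn_const.add h
    exact this.congr (fun x _ => hG x)
  have hFcont : ContinuousOn (fun x => c + ∫ t in (0:ℝ)..x, χ t) (Set.Icc 0 1) := by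
    have h : ContinuousOn (fun x => ∫ t in (0:ℝ)..x, χ t) (Set.uIcc (0:ℝ) 1) := by
      apply intervalIntegral.continuousOn_primitive_interval
      rw [Set.uIcc_of_le (zero_le_one)]
      exact hχ_cont.integrableOn_compact isCompact_Icc
    rw [Set.uIcc_of_le zero_le_one] at h
    exact continuousOn_const.add h
  -- The function H(s) = G(s) * (c + ∫₀ˢ χ) has zero right derivative on [0,1)
  set H : ℝ → ℝ := fun x => G x * (c + ∫ t in (0:ℝ)..x, χ t) with hHdef
  have hHcont : ContinuousOn H (Set.Icc 0 1) := hGcont.mul hFcont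
  have hHderiv : ∀ x ∈ Set.Ico (0:ℝ) 1, HasDerivWithinAt H 0 (Set.Ici x) x := by
    intro x hx
    have hx' : x ∈ Set.Icc (0:ℝ) 1 := ⟨hx.1, hx.2.le⟩
    -- the right-sided filter within (x,1] is below 𝓝[Icc 0 1] x
    have hfil : 𝓝[Set.Ioi x] x ≤ 𝓝[Set.Icc (0:ℝ) 1] x := by
      rw [← nhdsWithin_Ioc_eq_nhdsGT hx.2]
      exact nhdsWithin_mono _ (fun u hu => ⟨le_trans hx.1 hu.1.le, hu.2⟩)
    -- derivative of the primitive of χ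
    have hF : HasDerivWithinAt (fun u => ∫ t in (0:ℝ)..u, χ t) (χ x) (Set.Ici x) x := by
      apply intervalIntegral.integral_hasDerivWithinAt_right (hχ_int x hx')
        ⟨Set.Icc (0:ℝ) 1, hfil self_mem_nhdsWithin,
          hχ_cont.aestronglyMeasurable measurableSet_Icc⟩
      exact (hχ_cont x hx').mono_left hfil
    -- derivative of G
    have hGd : HasDerivWithinAt G (-(lam x)) (Set.Ici x) x := by
      have h1 : HasDerivWithinAt (fun u => ∫ t in (1:ℝ)..u, lam t) (lam x) (Set.Ici x) x := by
        apply intervalIntegral.integral_hasDerivWithinAt_right ((hlam_int x hx').symm)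
          ⟨Set.Icc (0:ℝ) 1, hfil self_mem_nhdsWithin,
            hlam_cont.aestronglyMeasurable measurableSet_Icc⟩
        exact (hlam_cont x hx').mono_left hfil
      have h2 : HasDerivWithinAt (fun u => μ + -∫ t in (1:ℝ)..u, lam t) (-(lam x))
          (Set.Ici x) x := (h1.neg).const_add μ
      have hGeq : ∀ u, G u = μ + -∫ t in (1:ℝ)..u, lam t := by
        intro u
        rw [hG u, intervalIntegral.integral_symm]
      exact h2.congr (fun u _ => hGeq u) (hGeq x)
    have hprod := hGd.mul ((hF.const_add c))
    have hzero : -(lam x) * (c + ∫ t in (0:ℝ)..x, χ t) + G x * χ x = 0 := by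
      have := heq x hx'
      linarith [this]
    rw [hzero] at hprod
    exact hprod
  -- H is constant, equal to H 0 = G 0 * c
  have hconst := constant_of_has_deriv_right_zero hHcont hHderiv
  have hH0 : H 0 = G 0 * c := by simp [hHdef]
  -- conclude
  intro s hs
  have hHs : G s * (c + ∫ t in (0:ℝ)..s, χ t) = G 0 * c := by
    have := hconst s hs
    rw [hH0] at this
    exact this
  have hGs := hGpos s hs
  have hGs0 := hGpos 0 ⟨le_rfl, zero_le_one⟩
  have hEs := heq s hs
  have hF : c + (∫ t in (0:ℝ)..s, χ t) = G 0 * c / G s := by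
    field_simp at hHs ⊢
    linarith [hHs]
  have : χ s = lam s * (G 0 * c / G s) / G s := by
    rw [← hF]
    field_simp
    linarith [hEs]
  rw [this]
  field_simp
end
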